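/- arXiv:2106.14872 — 6 statements merged into one kernel-verified Lean document; each statement's English description precedes it below -/
import Mathlib

section
/- Spectral properties, part 1: Let X be a complex infinite-dimensional separable Banach space and let A be a densely defined linear operator in X such that every power A^n (n ∈ ℕ) is a closed operator, and suppose there exist a set Y ⊆ C^∞(A) dense in X and a mapping B : Y → Y such that (1) ABf = f for every f ∈ Y and (2) for every f ∈ Y, max(r(A,f), r(B,f)) < 1, where r(A,f) := limsup_{n→∞} ‖A^n f‖^{1/n} and r(B,f) := limsup_{n→∞} ‖B^n f‖^{1/n}. Then for every f ∈ Y \ {0}, every r ∈ (r(A,f), 1), and every R ∈ (1, 1/r(B,f)) (with 1/0 := ∞), there exists M ∈ ℕ such that for all n ≥ M the annulus {λ ∈ ℂ : r^n ≤ |λ| ≤ R^n} is contained in the point spectrum σ_p(A^n); in particular, every λ ∈ ℂ with r(A,f) < |λ| < 1/r(B,f) is an eigenvalue of A^n for all sufficiently large n. -/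
open Filter Topology TopologicalSpace

/-- The domain of the `n`-th power of the operator `A` with domain `D`:
`x ∈ D(Aⁿ)` iff `Aᵏx ∈ D(A)` for all `k < n`. -/
def opDom {X : Type*} (A : X → X) (D : Set X) (n : ℕ) : Set X :=
  {x | ∀ k < n, A^[k] x ∈ D}

/-- `C^∞(A) = ⋂ₙ D(Aⁿ)`. -/
def opCinf {X : Type*} (A : X → X) (D : Set X) : Set X :=
  {x | ∀ k : ℕ, A^[k] x ∈ D}

/-- `A` is linear on the subspace `D`. -/
def IsLinearOn (𝕜 : Type*) {X : Type*} [RCLike 𝕜] [NormedAddCommGroup X]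
    [NormedSpace 𝕜 X] (A : X → X) (D : Set X) : Prop :=
  (∀ x ∈ D, ∀ y ∈ D, A (x + y) = A x + A y) ∧
  (∀ (c : 𝕜), ∀ x ∈ D, A (c • x) = c • A x)

/-- The `n`-th power of `A` (with domain `D`) is a closed operator:
its graph is closed in `X × X`. -/
def ClosedPower {X : Type*} [NormedAddCommGroup X] (A : X → X) (D : Set X)
    (n : ℕ) : Prop :=
  IsClosed {p : X × X | p.1 ∈ opDom A D n ∧ p.2 = A^[n] p.1}

/-- A hypercyclic vector for `A`: a nonzero `f ∈ C^∞(A)` with dense orbit. -/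
def HypercyclicVec {X : Type*} [NormedAddCommGroup X] (A : X → X) (D : Set X)
    (f : X) : Prop :=
  f ∈ opCinf A D ∧ f ≠ 0 ∧ Dense (Set.range fun n : ℕ => A^[n] f)

/-- `A` (with domain `D`) is hypercyclic. -/
def HypercyclicOp {X : Type*} [NormedAddCommGroup X] (A : X → X) (D : Set X) :
    Prop :=
  ∃ f, HypercyclicVec A D f

/-- `f` is a periodic point of `A`: `f ∈ D(A^N)` and `A^N f = f` for some `N ≥ 1`. -/
def PeriodicPt {X : Type*} (A : X → X) (D : Set X) (f : X) : Prop :=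
  ∃ N : ℕ, 0 < N ∧ f ∈ opDom A D N ∧ A^[N] f = f

/-- `A` (with domain `D`) is chaotic: hypercyclic with a dense set of periodic
points. -/
def ChaoticOp {X : Type*} [NormedAddCommGroup X] (A : X → X) (D : Set X) : Prop :=
  HypercyclicOp A D ∧ Dense {f | PeriodicPt A D f}

/-- The local quantity `r(T,f) = limsup ‖Tⁿ f‖^{1/n}`, computed in `ℝ≥0∞`. -/
noncomputable def orbitRad {X : Type*} [NormedAddCommGroup X] (T : X → X)
    (f : X) : ENNReal :=
  Filter.limsup (fun n : ℕ => (‖T^[n] f‖₊ : ENNReal) ^ (1 / (n : ℝ))) Filter.atTop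

/-- The point spectrum of the `n`-th power of `A` (with domain `D`):
`λ ∈ σ_p(Aⁿ)` iff `Aⁿ g = λ g` for some nonzero `g ∈ D(Aⁿ)`. -/
def pointSpecPow {X : Type*} [NormedAddCommGroup X] [NormedSpace ℂ X]
    (A : X → X) (D : Set X) (n : ℕ) : Set ℂ :=
  {l | ∃ g, g ≠ 0 ∧ g ∈ opDom A D n ∧ A^[n] g = l • g}

section auxq
set_option linter.unusedSectionVars false
variable {X : Type*} [NormedAddCommGroup X] [NormedSpace ℂ X]
  {A : X → X} {D : Submodule ℂ X}

lemma growth_bound (v : ℕ → X) (x : ℝ) (hx : 0 < x)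
    (h : Filter.limsup (fun n : ℕ => (‖v n‖₊ : ENNReal) ^ (1 / (n:ℝ))) Filter.atTop
      < ENNReal.ofReal x) :
    ∃ C : ℝ, 0 < C ∧ ∀ n, ‖v n‖ ≤ C * x ^ n := by
  have hev : ∀ᶠ n : ℕ in atTop, (‖v n‖₊ : ENNReal) ^ (1/(n:ℝ)) < ENNReal.ofReal x :=
    Filter.eventually_lt_of_limsup_lt h
  obtain ⟨N, hN⟩ := Filter.eventually_atTop.1 hev
  have key : ∀ n, N ≤ n → 1 ≤ n → ‖v n‖ ≤ x ^ n := by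
    intro n hn h1
    have hn0 : (n:ℝ) ≠ 0 := by positivity
    have h2 := ENNReal.rpow_lt_rpow (hN n hn) (show (0:ℝ) < (n:ℝ) by positivity)
    rw [← ENNReal.rpow_mul, one_div, inv_mul_cancel₀ hn0, ENNReal.rpow_one,
      ENNReal.ofReal_rpow_of_pos hx, Real.rpow_natCast] at h2
    rw [← ENNReal.ofReal_coe_nnreal, coe_nnnorm] at h2
    have := (ENNReal.ofReal_lt_ofReal_iff_of_nonneg (norm_nonneg _)).1 h2
    exact this.le
  refine ⟨(∑ k ∈ Finset.range (N+1), ‖v k‖ / x ^ k) + 1, by positivity, ?_⟩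
  intro n
  by_cases hn : n ≤ N
  · have h1 : ‖v n‖ / x ^ n ≤ ∑ k ∈ Finset.range (N+1), ‖v k‖ / x ^ k := by
      apply Finset.single_le_sum (f := fun k => ‖v k‖ / x ^ k)
      · intro i _; positivity
      · simpa using Nat.lt_succ_of_le hn
    have hxn : (0:ℝ) < x ^ n := by positivity
    rw [div_le_iff₀ hxn] at h1
    nlinarith [hxn]
  · push_neg at hn
    have h1 := key n hn.le (le_trans (Nat.one_le_iff_ne_zero.2 (by omega)) le_rfl)
    have hC1 : (1:ℝ) ≤ (∑ k ∈ Finset.range (N+1), ‖v k‖ / x ^ k) + 1 := by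
      have : (0:ℝ) ≤ ∑ k ∈ Finset.range (N+1), ‖v k‖ / x ^ k := by positivity
      linarith
    calc ‖v n‖ ≤ x ^ n := h1
      _ ≤ ((∑ k ∈ Finset.range (N+1), ‖v k‖ / x ^ k) + 1) * x ^ n := by
          nlinarith [pow_nonneg hx.le n]

def QP (A : X → X) (D : Submodule ℂ X) (v : X) (φ : ℕ → X) : Prop :=
  (∀ j, A^[j] v = φ j) ∧ ∀ j, φ j ∈ D

lemma QP.mem_opDom {v : X} {φ : ℕ → X} (h : QP A D v φ) (n : ℕ) :
    v ∈ opDom A (D : Set X) n := by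
  intro k _
  rw [h.1 k]; exact h.2 k

lemma QP.add (hlin : IsLinearOn ℂ A (D : Set X)) {v w : X} {φ ψ : ℕ → X}
    (h1 : QP A D v φ) (h2 : QP A D w ψ) :
    QP A D (v + w) (fun j => φ j + ψ j) := by
  constructor
  · intro j
    induction j with
    | zero => simp [← h1.1 0, ← h2.1 0]
    | succ j ih =>
        have e1 : A (φ j) = φ (j+1) := by
          rw [← h1.1 j, ← h1.1 (j+1)]
          exact (Function.iterate_succ_apply' A j v).symm
        have e2 : A (ψ j) = ψ (j+1) := by
          rw [← h2.1 j, ← h2.1 (j+1)]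
          exact (Function.iterate_succ_apply' A j w).symm
        rw [Function.iterate_succ_apply', ih]
        show A (φ j + ψ j) = φ (j+1) + ψ (j+1)
        rw [hlin.1 _ (h1.2 j) _ (h2.2 j), e1, e2]
  · intro j; exact D.add_mem (h1.2 j) (h2.2 j)

lemma QP.smul (hlin : IsLinearOn ℂ A (D : Set X)) {v : X} {φ : ℕ → X} (c : ℂ)
    (h : QP A D v φ) : QP A D (c • v) (fun j => c • φ j) := by
  constructor
  · intro j
    induction j with
    | zero => simp [← h.1 0]
    | succ j ih =>
        have e1 : A (φ j) = φ (j+1) := by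
          rw [← h.1 j, ← h.1 (j+1)]
          exact (Function.iterate_succ_apply' A j v).symm
        rw [Function.iterate_succ_apply', ih]
        show A (c • φ j) = c • φ (j+1)
        rw [hlin.2 _ _ (h.2 j), e1]
  · intro j; exact D.smul_mem c (h.2 j)

lemma QP.zero (hlin : IsLinearOn ℂ A (D : Set X)) :
    QP A D (0 : X) (fun _ => 0) := by
  have hA0 : A 0 = 0 := by
    have := hlin.2 0 0 D.zero_mem
    simpa using this
  constructor
  · intro j
    induction j with
    | zero => simp
    | succ j ih => rw [Function.iterate_succ_apply', ih, hA0]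
  · intro j; exact D.zero_mem

lemma QP.congr {v : X} {φ ψ : ℕ → X} (h : QP A D v φ) (hφ : ∀ j, φ j = ψ j) :
    QP A D v ψ := by
  refine ⟨fun j => (h.1 j).trans (hφ j), fun j => (hφ j) ▸ h.2 j⟩

lemma QP.sum (hlin : IsLinearOn ℂ A (D : Set X)) {ι : Type*} (s : Finset ι)
    (v : ι → X) (φ : ι → ℕ → X) (h : ∀ i ∈ s, QP A D (v i) (φ i)) :
    QP A D (∑ i ∈ s, v i) (fun j => ∑ i ∈ s, φ i j) := by
  classical
  induction s using Finset.induction_on with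
  | empty => simpa using QP.zero hlin
  | @insert a s' hx ih =>
      rw [Finset.sum_insert hx]
      exact ((h a (Finset.mem_insert_self a s')).add hlin
        (ih (fun i hi => h i (Finset.mem_insert_of_mem hi)))).congr
        (fun j => (Finset.sum_insert (f := fun i => φ i j) hx).symm)

lemma QP.of_orbit (u : ℤ → X) (hu : ∀ k, u k ∈ D) (huA : ∀ k, A (u k) = u (k+1))
    (k : ℤ) : QP A D (u k) (fun j => u (k + j)) := by
  constructor
  · intro j
    induction j with
    | zero => simp
    | succ j ih =>
        rw [Function.iterate_succ_apply', ih, huA]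
        congr 1; push_cast; ring
  · intro j; exact hu _

lemma summable_and_norm_tsum_le [CompleteSpace X] {v : ℕ → X} {c t : ℝ}
    (ht0 : 0 ≤ t) (ht : t < 1) (h : ∀ m, ‖v m‖ ≤ c * t ^ m) :
    Summable v ∧ ‖∑' m, v m‖ ≤ c * (1 - t)⁻¹ := by
  have hg : Summable (fun m : ℕ => c * t ^ m) :=
    (summable_geometric_of_lt_one ht0 ht).mul_left c
  have hs : Summable v := Summable.of_norm_bounded hg h
  have hnorm : Summable (fun m => ‖v m‖) :=
    Summable.of_nonneg_of_le (fun m => norm_nonneg _) h hg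
  refine ⟨hs, ?_⟩
  calc ‖∑' m, v m‖ ≤ ∑' m, ‖v m‖ := norm_tsum_le_tsum_norm hnorm
    _ ≤ ∑' m, c * t ^ m := Summable.tsum_le_tsum h hnorm hg
    _ = c * (1 - t)⁻¹ := by rw [tsum_mul_left, tsum_geometric_of_lt_one ht0 ht]

end auxq

section core
variable {X : Type*} [NormedAddCommGroup X] [NormedSpace ℂ X] [CompleteSpace X]

set_option maxHeartbeats 1000000 in
lemma part_one
    (D : Submodule ℂ X) (A : X → X)
    (hlin : IsLinearOn ℂ A (D : Set X))
    (hcl : ∀ n : ℕ, 0 < n → ClosedPower A (D : Set X) n)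
    (Y : Set X) (hYsub : Y ⊆ opCinf A (D : Set X))
    (B : X → X) (hBmaps : Set.MapsTo B Y Y)
    (h1 : ∀ f ∈ Y, A (B f) = f)
    (f : X) (hfY : f ∈ Y) (hf0 : f ≠ 0) (r R : ℝ)
    (hrA : orbitRad A f < ENNReal.ofReal r) (hr1 : r < 1)
    (hR1 : 1 < R) (hRB : ENNReal.ofReal R < (orbitRad B f)⁻¹) :
    ∃ M : ℕ, 0 < M ∧ ∀ n ≥ M, ∀ l : ℂ, r ^ n ≤ ‖l‖ → ‖l‖ ≤ R ^ n →
      l ∈ pointSpecPow A (D : Set X) n := by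
  classical
  have hr0 : 0 < r := ENNReal.ofReal_pos.1 (lt_of_le_of_lt zero_le hrA)
  have hR0 : 0 < R := lt_trans one_pos hR1
  -- choose x with orbitRad A f < ofReal x, 0 < x < r
  obtain ⟨e, he1, he2⟩ := exists_between hrA
  have heT : e ≠ ⊤ := (he2.trans_le le_top).ne
  set x := e.toReal with hx_def
  have hx0 : 0 < x := ENNReal.toReal_pos (lt_of_le_of_lt zero_le he1).ne' heT
  have hofx : ENNReal.ofReal x = e := ENNReal.ofReal_toReal heT
  have hxr : x < r := by
    have := (ENNReal.toReal_lt_toReal heT ENNReal.ofReal_ne_top).2 he2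
    rwa [ENNReal.toReal_ofReal hr0.le] at this
  -- choose y with orbitRad B f < ofReal y, 0 < y < R⁻¹
  have hB1 : orbitRad B f < (ENNReal.ofReal R)⁻¹ := ENNReal.lt_inv_iff_lt_inv.1 hRB
  obtain ⟨d, hd1, hd2⟩ := exists_between hB1
  have hRne : (ENNReal.ofReal R)⁻¹ ≠ ⊤ := by
    simp [ENNReal.inv_ne_top, ENNReal.ofReal_pos.2 hR0, (ENNReal.ofReal_pos.2 hR0).ne']
  have hdT : d ≠ ⊤ := (hd2.trans_le le_top).ne
  set y := d.toReal with hy_def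
  have hy0 : 0 < y := ENNReal.toReal_pos (lt_of_le_of_lt zero_le hd1).ne' hdT
  have hofy : ENNReal.ofReal y = d := ENNReal.ofReal_toReal hdT
  have hyR : y < R⁻¹ := by
    have h3 : (ENNReal.ofReal R)⁻¹ = ENNReal.ofReal R⁻¹ := (ENNReal.ofReal_inv_of_pos hR0).symm
    have := (ENNReal.toReal_lt_toReal hdT (h3 ▸ ENNReal.ofReal_ne_top)).2 hd2
    rwa [h3, ENNReal.toReal_ofReal (by positivity)] at this
  -- growth bounds
  obtain ⟨CA, hCA0, hCA⟩ := growth_bound (fun k => A^[k] f) x hx0 (by rw [hofx]; exact he1)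
  obtain ⟨CB, hCB0, hCB⟩ := growth_bound (fun k => B^[k] f) y hy0 (by rw [hofy]; exact hd1)
  set C := max CA CB with hC_def
  have hC0 : 0 < C := lt_max_of_lt_left hCA0
  have hCA' : ∀ k, ‖A^[k] f‖ ≤ C * x ^ k := fun k => le_trans (hCA k)
    (mul_le_mul_of_nonneg_right (le_max_left _ _) (by positivity))
  have hCB' : ∀ k, ‖B^[k] f‖ ≤ C * y ^ k := fun k => le_trans (hCB k)
    (mul_le_mul_of_nonneg_right (le_max_right _ _) (by positivity))
  set q : ℝ := x / r with hq_def
  set q' : ℝ := R * y with hq'_def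
  have hq0 : 0 < q := by positivity
  have hq1 : q < 1 := (div_lt_one hr0).2 hxr
  have hq'0 : 0 < q' := by positivity
  have hq'1 : q' < 1 := by
    have := mul_lt_mul_of_pos_left hyR hR0
    rwa [mul_inv_cancel₀ hR0.ne'] at this
  set t : ℝ := max q q' with ht_def
  have ht0 : 0 < t := lt_max_of_lt_left hq0
  have ht1 : t < 1 := max_lt hq1 hq'1
  -- choose M
  have hfn : 0 < ‖f‖ := norm_pos_iff.2 hf0
  have htend : Tendsto (fun n : ℕ => 2*C*t^n*(1-t^n)⁻¹) atTop (𝓝 0) := by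
    have hp : Tendsto (fun n : ℕ => t^n) atTop (𝓝 0) :=
      tendsto_pow_atTop_nhds_zero_of_lt_one ht0.le ht1
    have h2 : Tendsto (fun n : ℕ => (1-t^n)⁻¹) atTop (𝓝 1) := by
      have := ((tendsto_const_nhds (x := (1:ℝ)) (f := atTop)).sub hp).inv₀ (by norm_num)
      simpa using this
    have := (hp.const_mul (2*C)).mul h2
    simpa using this
  obtain ⟨M₀, hM₀⟩ := eventually_atTop.1 (htend.eventually_lt_const hfn)
  refine ⟨max M₀ 1, Nat.lt_of_lt_of_le one_pos (le_max_right _ _), ?_⟩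
  intro n hn l hl1 hl2
  have hn1 : 1 ≤ n := le_trans (le_max_right M₀ 1) hn
  have hnM₀ : M₀ ≤ n := le_trans (le_max_left _ _) hn
  have hrn : 0 < r^n := pow_pos hr0 n
  have hln0 : 0 < ‖l‖ := lt_of_lt_of_le hrn hl1
  have hl0 : l ≠ 0 := norm_pos_iff.1 hln0
  -- the orbit family
  set u : ℤ → X := fun k => if 0 ≤ k then A^[k.toNat] f else B^[(-k).toNat] f with hu_def
  have hu_nat : ∀ m : ℕ, u (m:ℤ) = A^[m] f := by
    intro m; simp [hu_def]
  have hu_neg : ∀ m : ℕ, u (-(m:ℤ)) = B^[m] f := by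
    intro m
    cases m with
    | zero => simp [hu_def]
    | succ m =>
        have hlt : ¬ (0:ℤ) ≤ -((m+1 : ℕ):ℤ) := by omega
        have harg : (-(-((m+1 : ℕ):ℤ))).toNat = m+1 := by omega
        simp only [hu_def, hlt, if_false, harg]
  have hu_D : ∀ k, u k ∈ D := by
    intro k
    obtain ⟨m, rfl | rfl⟩ := Int.eq_nat_or_neg k
    · rw [hu_nat]; exact hYsub hfY m
    · rw [hu_neg]
      have := hYsub (hBmaps.iterate m hfY) 0
      simpa using this
  have hu_A : ∀ k, A (u k) = u (k+1) := by
    intro k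
    obtain ⟨m, rfl | rfl⟩ := Int.eq_nat_or_neg k
    · rw [hu_nat]
      have e : ((m:ℤ)+1) = ((m+1 : ℕ) : ℤ) := by push_cast; ring
      rw [e, hu_nat, Function.iterate_succ_apply']
    · cases m with
      | zero =>
          simp only [Nat.cast_zero, neg_zero, zero_add]
          have e0 : u (0:ℤ) = f := by simpa using hu_nat 0
          have e1 : u (1:ℤ) = A^[1] f := by simpa using hu_nat 1
          rw [e0, e1]; simp
      | succ m =>
          have e1 := hu_neg (m+1)
          have e2 : (-((m+1:ℕ):ℤ) + 1) = -((m:ℕ):ℤ) := by push_cast; ring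
          rw [e1, e2, hu_neg m, Function.iterate_succ_apply']
          exact h1 _ (hBmaps.iterate m hfY)
  -- the series
  set vA : ℕ → X := fun m => (l⁻¹)^(m+1) • A^[n*(m+1)] f with hvA_def
  set vB : ℕ → X := fun m => l^(m+1) • B^[n*(m+1)] f with hvB_def
  set vA1 : ℕ → X := fun m => (l⁻¹)^m • A^[n*(m+1)] f with hvA1_def
  set vB0 : ℕ → X := fun m => l^(m+1) • B^[n*m] f with hvB0_def
  have htn1 : t^n < 1 := pow_lt_one₀ ht0.le ht1 (by omega)
  have htn0 : 0 < t^n := pow_pos ht0 n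
  have hinvl : ‖l‖⁻¹ ≤ (r^n)⁻¹ := inv_anti₀ hrn hl1
  have hnormA : ∀ m, ‖vA m‖ ≤ (C*t^n) * (t^n)^m := by
    intro m
    have e : ‖vA m‖ = (‖l‖⁻¹)^(m+1) * ‖A^[n*(m+1)] f‖ := by
      rw [hvA_def]; rw [norm_smul, norm_pow, norm_inv]
    rw [e]
    calc (‖l‖⁻¹)^(m+1) * ‖A^[n*(m+1)] f‖
        ≤ ((r^n)⁻¹)^(m+1) * (C * x^(n*(m+1))) := by
          apply mul_le_mul (by gcongr) (hCA' _) (norm_nonneg _) (by positivity)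
      _ = C * (q^n)^(m+1) := by
          rw [hq_def, div_pow, div_pow, pow_mul]
          field_simp
          rw [← mul_pow, one_div, inv_mul_cancel₀ hrn.ne', one_pow]
      _ ≤ C * (t^n)^(m+1) := by
          gcongr
          exact le_max_left _ _
      _ = (C*t^n) * (t^n)^m := by ring
  have hnormB : ∀ m, ‖vB m‖ ≤ (C*t^n) * (t^n)^m := by
    intro m
    have e : ‖vB m‖ = ‖l‖^(m+1) * ‖B^[n*(m+1)] f‖ := by
      rw [hvB_def]; rw [norm_smul, norm_pow]
    rw [e]
    calc ‖l‖^(m+1) * ‖B^[n*(m+1)] f‖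
        ≤ (R^n)^(m+1) * (C * y^(n*(m+1))) := by
          apply mul_le_mul (by gcongr) (hCB' _) (norm_nonneg _) (by positivity)
      _ = C * (q'^n)^(m+1) := by
          rw [hq'_def, mul_pow, pow_mul]
          ring
      _ ≤ C * (t^n)^(m+1) := by
          gcongr
          exact le_max_right _ _
      _ = (C*t^n) * (t^n)^m := by ring
  have hnormB0 : ∀ m, ‖vB0 m‖ ≤ (C*R^n) * (t^n)^m := by
    intro m
    have e : ‖vB0 m‖ = ‖l‖^(m+1) * ‖B^[n*m] f‖ := by
      rw [hvB0_def]; rw [norm_smul, norm_pow]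
    rw [e]
    calc ‖l‖^(m+1) * ‖B^[n*m] f‖
        ≤ (R^n)^(m+1) * (C * y^(n*m)) := by
          apply mul_le_mul (by gcongr) (hCB' _) (norm_nonneg _) (by positivity)
      _ = (C*R^n) * (q'^n)^m := by
          rw [hq'_def, mul_pow, pow_mul]
          ring
      _ ≤ (C*R^n) * (t^n)^m := by
          gcongr
          exact le_max_right _ _
  -- summability and tsum bounds
  obtain ⟨hsA, hPAle⟩ := summable_and_norm_tsum_le htn0.le htn1 hnormA
  obtain ⟨hsB, hPBle⟩ := summable_and_norm_tsum_le htn0.le htn1 hnormB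
  have hsB0 : Summable vB0 := (summable_and_norm_tsum_le htn0.le htn1 hnormB0).1
  have hvA1eq : vA1 = fun m => l • vA m := by
    funext m
    rw [hvA1_def, hvA_def, smul_smul]
    congr 1
    rw [pow_succ, mul_comm ((l⁻¹)^m) l⁻¹, ← mul_assoc, mul_inv_cancel₀ hl0, one_mul]
  have hsA1 : Summable vA1 := by
    rw [hvA1eq]; exact hsA.const_smul l
  have hsA2 : Summable (fun m => vA1 (m+1)) := (summable_nat_add_iff 1).2 hsA1
  set PA := ∑' m, vA m with hPA_def
  set PB := ∑' m, vB m with hPB_def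
  set G := f + PA + PB with hG_def
  -- G ≠ 0
  have hGne : G ≠ 0 := by
    intro hG
    have h1tn : 0 < 1 - t^n := by linarith
    have hfle : ‖f‖ ≤ ‖PA‖ + ‖PB‖ := by
      have : f = -(PA + PB) := by
        rw [hG_def] at hG
        linear_combination (norm := abel) hG
      calc ‖f‖ = ‖PA + PB‖ := by rw [this, norm_neg]
        _ ≤ ‖PA‖ + ‖PB‖ := norm_add_le _ _
    have hM := hM₀ n hnM₀
    have hinv : (0:ℝ) < (1-t^n)⁻¹ := by positivity
    nlinarith [hPAle, hPBle]
  -- partial sums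
  set sN : ℕ → X := fun N => f + (∑ m ∈ Finset.range N, vA m) + (∑ m ∈ Finset.range N, vB m)
    with hsN_def
  have hts : Tendsto sN atTop (𝓝 G) := by
    have hA' : Tendsto (fun N => ∑ m ∈ Finset.range N, vA m) atTop (𝓝 PA) :=
      hsA.hasSum.tendsto_sum_nat
    have hB' : Tendsto (fun N => ∑ m ∈ Finset.range N, vB m) atTop (𝓝 PB) :=
      hsB.hasSum.tendsto_sum_nat
    exact ((tendsto_const_nhds (x := f) (f := atTop)).add hA').add hB' 
  -- QP structure of partial sums
  have hu0 : u (0:ℤ) = f := by simpa using hu_nat 0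
  have hQ : ∀ N, QP A D (sN N) (fun j => u (j:ℤ)
      + (∑ m ∈ Finset.range N, (l⁻¹)^(m+1) • u ((n*(m+1) : ℕ) + (j:ℤ)))
      + (∑ m ∈ Finset.range N, l^(m+1) • u (-((n*(m+1) : ℕ) : ℤ) + (j:ℤ)))) := by
    intro N
    have q1 : QP A D f (fun j => u ((0:ℤ) + (j:ℤ))) := by
      have := QP.of_orbit u hu_D hu_A 0
      rwa [hu0] at this
    have q1' : QP A D f (fun j => u (j:ℤ)) := q1.congr (fun j => by rw [zero_add])
    have qA : QP A D (∑ m ∈ Finset.range N, vA m)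
        (fun j => ∑ m ∈ Finset.range N, (l⁻¹)^(m+1) • u ((n*(m+1) : ℕ) + (j:ℤ))) := by
      apply QP.sum hlin
      intro m _
      have := (QP.of_orbit u hu_D hu_A ((n*(m+1) : ℕ) : ℤ)).smul hlin ((l⁻¹)^(m+1))
      rwa [hu_nat] at this
    have qB : QP A D (∑ m ∈ Finset.range N, vB m)
        (fun j => ∑ m ∈ Finset.range N, l^(m+1) • u (-((n*(m+1) : ℕ) : ℤ) + (j:ℤ))) := by
      apply QP.sum hlin
      intro m _
      have := (QP.of_orbit u hu_D hu_A (-((n*(m+1) : ℕ) : ℤ))).smul hlin (l^(m+1))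
      rwa [hu_neg] at this
    exact (q1'.add hlin qA).add hlin qB
  -- value of A^[n] on partial sums
  have hAn : ∀ N, A^[n] (sN N) = A^[n] f + (∑ m ∈ Finset.range N, vA1 (m+1))
      + (∑ m ∈ Finset.range N, vB0 m) := by
    intro N
    have eA : ∀ m : ℕ, (l⁻¹)^(m+1) • u (((n*(m+1):ℕ) : ℤ) + (n:ℤ)) = vA1 (m+1) := by
      intro m
      have e : ((n*(m+1) : ℕ) : ℤ) + (n:ℤ) = ((n*(m+1+1) : ℕ) : ℤ) := by push_cast; ring
      rw [e, hu_nat, hvA1_def]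
    have eB : ∀ m : ℕ, l^(m+1) • u (-((n*(m+1):ℕ) : ℤ) + (n:ℤ)) = vB0 m := by
      intro m
      have e : -((n*(m+1) : ℕ) : ℤ) + (n:ℤ) = -((n*m : ℕ) : ℤ) := by push_cast; ring
      rw [e, hu_neg, hvB0_def]
    rw [(hQ N).1 n]
    beta_reduce
    rw [hu_nat n, Finset.sum_congr rfl (fun m _ => eA m), Finset.sum_congr rfl (fun m _ => eB m)]
  have htAs : Tendsto (fun N => A^[n] (sN N)) atTop
      (𝓝 (A^[n] f + (∑' m, vA1 (m+1)) + (∑' m, vB0 m))) := by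
    apply Tendsto.congr (fun N => (hAn N).symm)
    exact (tendsto_const_nhds.add hsA2.hasSum.tendsto_sum_nat).add hsB0.hasSum.tendsto_sum_nat
  -- the limit identity
  have hkey : A^[n] f + (∑' m, vA1 (m+1)) + (∑' m, vB0 m) = l • G := by
    have e1 : ∑' m, vA1 m = A^[n] f + ∑' m, vA1 (m+1) := by
      rw [Summable.tsum_eq_zero_add hsA1]
      congr 1
      rw [hvA1_def]
      simp
    have e2 : ∑' m, vA1 m = l • PA := by
      rw [hvA1eq, hPA_def, Summable.tsum_const_smul l hsA]
    have e3 : ∑' m, vB0 m = l • f + l • PB := by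
      rw [Summable.tsum_eq_zero_add hsB0]
      congr 1
      · rw [hvB0_def]; simp
      · have e4 : ∀ m : ℕ, vB0 (m+1) = l • vB m := by
          intro m
          rw [hvB0_def, hvB_def, smul_smul, ← pow_succ']
        calc (∑' m, vB0 (m+1)) = ∑' m, l • vB m := by
              apply tsum_congr; intro m; exact e4 m
          _ = l • PB := by rw [hPB_def, Summable.tsum_const_smul l hsB]
    rw [← e1, e2, e3, hG_def, smul_add, smul_add]
    abel
  -- closed graph
  have hlim : Tendsto (fun N => (sN N, A^[n] (sN N))) atTop (𝓝 (G, l • G)) :=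
    hts.prodMk_nhds (by rw [← hkey]; exact htAs)
  have hGmem := (hcl n (by omega)).mem_of_tendsto hlim
    (Filter.Eventually.of_forall (fun N => ⟨(hQ N).mem_opDom n, rfl⟩))
  exact ⟨G, hGne, hGmem.1, hGmem.2.symm⟩
end core

/-- **Spectral properties, part 1.** -/
theorem spectral_properties_part1
    {X : Type*} [NormedAddCommGroup X] [NormedSpace ℂ X]
    [CompleteSpace X] [SeparableSpace X]
    (hinfdim : ¬ FiniteDimensional ℂ X)
    (D : Submodule ℂ X) (A : X → X)
    (hlin : IsLinearOn ℂ A (D : Set X))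
    (hdd : Dense (D : Set X))
    (hcl : ∀ n : ℕ, 0 < n → ClosedPower A (D : Set X) n)
    (Y : Set X) (hYsub : Y ⊆ opCinf A (D : Set X)) (hYdense : Dense Y)
    (B : X → X) (hBmaps : Set.MapsTo B Y Y)
    (h1 : ∀ f ∈ Y, A (B f) = f)
    (h2 : ∀ f ∈ Y, max (orbitRad A f) (orbitRad B f) < 1) :
    (∀ f ∈ Y, f ≠ 0 → ∀ r R : ℝ,
      orbitRad A f < ENNReal.ofReal r → r < 1 →
      1 < R → ENNReal.ofReal R < (orbitRad B f)⁻¹ →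
      ∃ M : ℕ, 0 < M ∧ ∀ n ≥ M, ∀ l : ℂ, r ^ n ≤ ‖l‖ → ‖l‖ ≤ R ^ n →
        l ∈ pointSpecPow A (D : Set X) n) ∧
    (∀ f ∈ Y, f ≠ 0 → ∀ l : ℂ,
      orbitRad A f < ENNReal.ofReal ‖l‖ → ENNReal.ofReal ‖l‖ < (orbitRad B f)⁻¹ →
      ∃ M : ℕ, 0 < M ∧ ∀ n ≥ M, l ∈ pointSpecPow A (D : Set X) n) := by
  have P1 : (∀ f ∈ Y, f ≠ 0 → ∀ r R : ℝ,
      orbitRad A f < ENNReal.ofReal r → r < 1 →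
      1 < R → ENNReal.ofReal R < (orbitRad B f)⁻¹ →
      ∃ M : ℕ, 0 < M ∧ ∀ n ≥ M, ∀ l : ℂ, r ^ n ≤ ‖l‖ → ‖l‖ ≤ R ^ n →
        l ∈ pointSpecPow A (D : Set X) n) := by
    intro f hfY hf0 r R hrA hr1 hR1 hRB
    exact part_one D A hlin hcl Y hYsub B hBmaps h1 f hfY hf0 r R hrA hr1 hR1 hRB
  refine ⟨P1, ?_⟩
  intro f hfY hf0 l hlA hlB
  have hA1 : orbitRad A f < 1 := lt_of_le_of_lt (le_max_left _ _) (h2 f hfY)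
  have hB1 : orbitRad B f < 1 := lt_of_le_of_lt (le_max_right _ _) (h2 f hfY)
  obtain ⟨e, he1, he2⟩ := exists_between hA1
  have heT : e ≠ ⊤ := (he2.trans_le le_top).ne
  set r := e.toReal with hr_def
  have hofr : ENNReal.ofReal r = e := ENNReal.ofReal_toReal heT
  have hr1 : r < 1 := by
    have := (ENNReal.toReal_lt_toReal heT ENNReal.one_ne_top).2 he2
    simpa using this
  have hrA : orbitRad A f < ENNReal.ofReal r := by rw [hofr]; exact he1
  have hBinv : (1:ENNReal) < (orbitRad B f)⁻¹ := by
    apply ENNReal.lt_inv_iff_lt_inv.2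
    rw [inv_one]
    exact hB1
  obtain ⟨d, hd1, hd2⟩ := exists_between hBinv
  have hdT : d ≠ ⊤ := (hd2.trans_le le_top).ne
  set R := d.toReal with hR_def
  have hofR : ENNReal.ofReal R = d := ENNReal.ofReal_toReal hdT
  have hR1 : 1 < R := by
    have := (ENNReal.toReal_lt_toReal ENNReal.one_ne_top hdT).2 hd1
    simpa using this
  have hRB : ENNReal.ofReal R < (orbitRad B f)⁻¹ := by rw [hofR]; exact hd2
  obtain ⟨M₀, hM₀pos, hM₀⟩ := P1 f hfY hf0 r R hrA hr1 hR1 hRB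
  have hl0 : 0 < ‖l‖ :=
    ENNReal.ofReal_pos.1 (lt_of_le_of_lt zero_le hlA)
  have hr0 : 0 < r := ENNReal.ofReal_pos.1 (lt_of_le_of_lt zero_le hrA)
  have hev1 : ∀ᶠ n : ℕ in atTop, r^n ≤ ‖l‖ := by
    have := (tendsto_pow_atTop_nhds_zero_of_lt_one hr0.le hr1).eventually_lt_const hl0
    exact this.mono fun n h => h.le
  have hev2 : ∀ᶠ n : ℕ in atTop, ‖l‖ ≤ R^n :=
    (tendsto_pow_atTop_atTop_of_one_lt hR1).eventually_ge_atTop ‖l‖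
  obtain ⟨M₁, hM₁⟩ := Filter.eventually_atTop.1 (hev1.and hev2)
  refine ⟨max M₀ M₁, lt_of_lt_of_le hM₀pos (le_max_left _ _), ?_⟩
  intro n hn
  exact hM₀ n (le_trans (le_max_left _ _) hn) l
    (hM₁ n (le_trans (le_max_right _ _) hn)).1
    (hM₁ n (le_trans (le_max_right _ _) hn)).2
end

section
/- Spectral properties, part 2: Let X be a complex infinite-dimensional separable Banach space and let A be a densely defined linear operator in X such that every power A^n (n ∈ ℕ) is a closed operator, and suppose there exist a set Y ⊆ C^∞(A) dense in X, a mapping B : Y → Y with ABf = f for every f ∈ Y, and a single α ∈ (0,1) such that for every f ∈ Y there exists c = c(f,α) > 0 with max(‖A^n f‖, ‖B^n f‖) ≤ c·α^n for all n ∈ ℕ. Then for every γ ∈ (α, 1) there exists M ∈ ℕ such that for all n ≥ M the annulus {λ ∈ ℂ : γ^n ≤ |λ| ≤ 1/γ^n} is contained in σ_p(A^n); in particular, every λ ∈ ℂ with α < |λ| < 1/α is an eigenvalue of A^n for all sufficiently large n. -/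
open Filter Topology TopologicalSpace

set_option linter.unusedSectionVars false

section Aux
variable {X : Type*} [NormedAddCommGroup X] [NormedSpace ℂ X]
  {D : Submodule ℂ X} {A : X → X} (hlin : IsLinearOn ℂ A (D : Set X))

lemma cinf_iter_mem {x : X} (hx : x ∈ opCinf A (D : Set X)) (j : ℕ) :
    A^[j] x ∈ opCinf A (D : Set X) := fun k => by
  rw [← Function.iterate_add_apply]; exact hx (k + j)

lemma cinf_mem_dom {x : X} (hx : x ∈ opCinf A (D : Set X)) (n : ℕ) :
    x ∈ opDom A (D : Set X) n := fun k _ => hx k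

include hlin

lemma iter_add {x y : X} (hx : x ∈ opCinf A (D : Set X))
    (hy : y ∈ opCinf A (D : Set X)) (k : ℕ) :
    A^[k] (x + y) = A^[k] x + A^[k] y := by
  induction k with
  | zero => rfl
  | succ k ih =>
    rw [Function.iterate_succ_apply', Function.iterate_succ_apply',
      Function.iterate_succ_apply', ih]
    exact hlin.1 _ (hx k) _ (hy k)

lemma cinf_add {x y : X} (hx : x ∈ opCinf A (D : Set X))
    (hy : y ∈ opCinf A (D : Set X)) : x + y ∈ opCinf A (D : Set X) := fun k => by
  rw [iter_add hlin hx hy]; exact D.add_mem (hx k) (hy k)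

lemma iter_smul (c : ℂ) {x : X} (hx : x ∈ opCinf A (D : Set X)) (k : ℕ) :
    A^[k] (c • x) = c • A^[k] x := by
  induction k with
  | zero => rfl
  | succ k ih =>
    rw [Function.iterate_succ_apply', Function.iterate_succ_apply', ih]
    exact hlin.2 c _ (hx k)

lemma cinf_smul (c : ℂ) {x : X} (hx : x ∈ opCinf A (D : Set X)) :
    c • x ∈ opCinf A (D : Set X) := fun k => by
  rw [iter_smul hlin c hx]; exact D.smul_mem c (hx k)

lemma iter_zero (k : ℕ) : A^[k] (0 : X) = 0 := by
  have h0 : A (0 : X) = 0 := by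
    have := hlin.2 (0 : ℂ) 0 D.zero_mem
    simpa using this
  induction k with
  | zero => rfl
  | succ k ih => rw [Function.iterate_succ_apply', ih, h0]

lemma cinf_zero : (0 : X) ∈ opCinf A (D : Set X) := fun k => by
  rw [iter_zero hlin]; exact D.zero_mem

lemma cinf_sum {ι : Type*} {s : Finset ι} {u : ι → X}
    (hu : ∀ i ∈ s, u i ∈ opCinf A (D : Set X)) :
    (∑ i ∈ s, u i) ∈ opCinf A (D : Set X) := by
  classical
  induction s using Finset.induction with
  | empty => simpa using cinf_zero hlin
  | insert a s hnot ih =>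
    rw [Finset.sum_insert hnot]
    exact cinf_add hlin (hu a (Finset.mem_insert_self a s))
      (ih (fun i hi => hu i (Finset.mem_insert_of_mem hi)))

lemma iter_sum {ι : Type*} (s : Finset ι) (u : ι → X)
    (hu : ∀ i ∈ s, u i ∈ opCinf A (D : Set X)) (k : ℕ) :
    A^[k] (∑ i ∈ s, u i) = ∑ i ∈ s, A^[k] (u i) := by
  classical
  induction s using Finset.induction with
  | empty => simp [iter_zero hlin]
  | insert a s hnot ih =>
    rw [Finset.sum_insert hnot, Finset.sum_insert hnot,
      iter_add hlin (hu a (Finset.mem_insert_self a s))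
        (cinf_sum hlin (fun i hi => hu i (Finset.mem_insert_of_mem hi))),
      ih (fun i hi => hu i (Finset.mem_insert_of_mem hi))]


end Aux

section BAux
variable {X : Type*} [NormedAddCommGroup X] [NormedSpace ℂ X]
  {D : Submodule ℂ X} {A : X → X} {Y : Set X} {B : X → X}

omit [NormedAddCommGroup X] [NormedSpace ℂ X] in
lemma B_iter_mem (hBmaps : Set.MapsTo B Y Y) (m : ℕ) {f : X} (hf : f ∈ Y) :
    B^[m] f ∈ Y := (hBmaps.iterate m) hf

omit [NormedAddCommGroup X] [NormedSpace ℂ X] in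
lemma iter_A_B (hBmaps : Set.MapsTo B Y Y) (h1 : ∀ f ∈ Y, A (B f) = f)
    (j m : ℕ) {f : X} (hf : f ∈ Y) : A^[j] (B^[m + j] f) = B^[m] f := by
  induction j with
  | zero => rfl
  | succ j ih =>
    have h2 : A (B^[m + (j+1)] f) = B^[m + j] f := by
      have h3 : B^[m + (j+1)] f = B (B^[m+j] f) := by
        rw [show m + (j+1) = (m+j) + 1 from by ring]
        exact Function.iterate_succ_apply' B (m+j) f
      rw [h3, h1 _ (B_iter_mem hBmaps (m+j) hf)]
    rw [Function.iterate_succ_apply, h2]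
    exact ih

end BAux

section Core
variable {X : Type*} [NormedAddCommGroup X] [NormedSpace ℂ X] [CompleteSpace X]
  {D : Submodule ℂ X} {A : X → X} {Y : Set X} {B : X → X}

lemma eigen_core (hlin : IsLinearOn ℂ A (D : Set X))
    (hYsub : Y ⊆ opCinf A (D : Set X)) (hBmaps : Set.MapsTo B Y Y)
    (h1 : ∀ f ∈ Y, A (B f) = f) {f : X} (hf : f ∈ Y) {n : ℕ}
    (hcl : ClosedPower A (D : Set X) n) (l : ℂ) (hl : l ≠ 0)
    (hsum : Summable (fun k : ℕ =>
      (l⁻¹)^(k+1) • A^[n*(k+1)] f + l^(k+1) • B^[n*(k+1)] f))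
    (ht1 : Filter.Tendsto (fun m : ℕ => (l⁻¹)^m • A^[n*(m+1)] f)
      Filter.atTop (nhds 0))
    (ht2 : Filter.Tendsto (fun m : ℕ => l^(m+1) • B^[n*m] f)
      Filter.atTop (nhds 0)) :
    (f + ∑' k : ℕ, ((l⁻¹)^(k+1) • A^[n*(k+1)] f + l^(k+1) • B^[n*(k+1)] f))
      ∈ opDom A (D : Set X) n ∧
    A^[n] (f + ∑' k : ℕ,
        ((l⁻¹)^(k+1) • A^[n*(k+1)] f + l^(k+1) • B^[n*(k+1)] f))
      = l • (f + ∑' k : ℕ,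
        ((l⁻¹)^(k+1) • A^[n*(k+1)] f + l^(k+1) • B^[n*(k+1)] f)) := by
  set w : ℕ → X := fun k =>
    (l⁻¹)^(k+1) • A^[n*(k+1)] f + l^(k+1) • B^[n*(k+1)] f with hw
  set g : X := f + ∑' k, w k with hg
  have hfC : f ∈ opCinf A (D : Set X) := hYsub hf
  have hPC : ∀ j : ℕ, A^[j] f ∈ opCinf A (D : Set X) := cinf_iter_mem hfC
  have hQC : ∀ j : ℕ, B^[j] f ∈ opCinf A (D : Set X) :=
    fun j => hYsub (B_iter_mem hBmaps j hf)
  have hwC : ∀ k, w k ∈ opCinf A (D : Set X) := fun k =>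
    cinf_add hlin (cinf_smul hlin _ (hPC _)) (cinf_smul hlin _ (hQC _))
  have hSC : ∀ m : ℕ, (f + ∑ k ∈ Finset.range m, w k) ∈ opCinf A (D : Set X) :=
    fun m => cinf_add hlin hfC (cinf_sum hlin (fun i _ => hwC i))
  -- A^[n] on the generators
  have hP : ∀ j : ℕ, A^[n] (A^[n*j] f) = A^[n*(j+1)] f := fun j => by
    rw [← Function.iterate_add_apply]; congr 1; ring
  have hQ : ∀ j : ℕ, A^[n] (B^[n*(j+1)] f) = B^[n*j] f := fun j => by
    rw [show n*(j+1) = n*j + n from by ring]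
    exact iter_A_B hBmaps h1 n (n*j) hf
  have hAw : ∀ k : ℕ, A^[n] (w k) =
      (l⁻¹)^(k+1) • A^[n*(k+2)] f + l^(k+1) • B^[n*k] f := fun k => by
    rw [hw]
    rw [iter_add hlin (cinf_smul hlin _ (hPC _)) (cinf_smul hlin _ (hQC _)),
      iter_smul hlin _ (hPC _), iter_smul hlin _ (hQC _), hP (k+1), hQ k]
  -- the key finite-sum identity
  have key : ∀ m : ℕ, A^[n] (f + ∑ k ∈ Finset.range m, w k)
      = l • (f + ∑ k ∈ Finset.range m, w k)
        + (l⁻¹)^m • A^[n*(m+1)] f - l^(m+1) • B^[n*m] f := by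
    intro m
    induction m with
    | zero =>
      simp only [Finset.range_zero, Finset.sum_empty, add_zero]
      rw [pow_zero, one_smul, pow_one, Nat.mul_zero, Nat.mul_one,
        Function.iterate_zero_apply]
      abel
    | succ m ih =>
      have hstep : f + ∑ k ∈ Finset.range (m+1), w k
          = (f + ∑ k ∈ Finset.range m, w k) + w m := by
        rw [Finset.sum_range_succ, add_assoc]
      rw [hstep, iter_add hlin (hSC m) (hwC m), ih, hAw m]
      have hll : (l⁻¹ : ℂ)^m = l * (l⁻¹)^(m+1) := by
        rw [pow_succ']
        field_simp
      rw [hw]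
      simp only []
      rw [show n*(m+2) = n*(m+1+1) from by ring]
      rw [hll]
      module
  -- partial sums tend to g
  have hS_tend : Filter.Tendsto (fun m => f + ∑ k ∈ Finset.range m, w k)
      Filter.atTop (nhds g) :=
    Filter.Tendsto.const_add f hsum.hasSum.tendsto_sum_nat
  have hAS_tend : Filter.Tendsto (fun m => A^[n] (f + ∑ k ∈ Finset.range m, w k))
      Filter.atTop (nhds (l • g)) := by
    simp only [key]
    have h3 : Filter.Tendsto (fun m => l • (f + ∑ k ∈ Finset.range m, w k))
        Filter.atTop (nhds (l • g)) := hS_tend.const_smul l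
    simpa using (h3.add ht1).sub ht2
  have hmem : ∀ m, ((f + ∑ k ∈ Finset.range m, w k,
      A^[n] (f + ∑ k ∈ Finset.range m, w k)) : X × X) ∈
      {p : X × X | p.1 ∈ opDom A (D : Set X) n ∧ p.2 = A^[n] p.1} :=
    fun m => ⟨cinf_mem_dom (hSC m) n, rfl⟩
  have hlim : ((g, l • g) : X × X) ∈
      {p : X × X | p.1 ∈ opDom A (D : Set X) n ∧ p.2 = A^[n] p.1} :=
    hcl.mem_of_tendsto (hS_tend.prodMk_nhds hAS_tend)
      (Filter.Eventually.of_forall hmem)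
  exact ⟨hlim.1, hlim.2.symm⟩

end Core

/-- **Spectral properties, part 2.** -/
theorem spectral_properties_part2
    {X : Type*} [NormedAddCommGroup X] [NormedSpace ℂ X]
    [CompleteSpace X] [SeparableSpace X]
    (hinfdim : ¬ FiniteDimensional ℂ X)
    (D : Submodule ℂ X) (A : X → X)
    (hlin : IsLinearOn ℂ A (D : Set X))
    (hdd : Dense (D : Set X))
    (hcl : ∀ n : ℕ, 0 < n → ClosedPower A (D : Set X) n)
    (Y : Set X) (hYsub : Y ⊆ opCinf A (D : Set X)) (hYdense : Dense Y)
    (B : X → X) (hBmaps : Set.MapsTo B Y Y)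
    (h1 : ∀ f ∈ Y, A (B f) = f)
    (α : ℝ) (hα : α ∈ Set.Ioo (0 : ℝ) 1)
    (h2 : ∀ f ∈ Y, ∃ c > 0, ∀ n : ℕ, 0 < n →
      max ‖A^[n] f‖ ‖B^[n] f‖ ≤ c * α ^ n) :
    (∀ γ : ℝ, α < γ → γ < 1 →
      ∃ M : ℕ, 0 < M ∧ ∀ n ≥ M, ∀ l : ℂ, γ ^ n ≤ ‖l‖ → ‖l‖ ≤ 1 / γ ^ n →
        l ∈ pointSpecPow A (D : Set X) n) ∧
    (∀ l : ℂ, α < ‖l‖ → ‖l‖ < 1 / α →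
      ∃ M : ℕ, 0 < M ∧ ∀ n ≥ M, l ∈ pointSpecPow A (D : Set X) n) := by
  obtain ⟨hα0, hα1⟩ := hα
  obtain ⟨f, hfY, hf0⟩ : ∃ f ∈ Y, f ≠ 0 := by
    by_contra h
    push_neg at h
    have hY0 : Y ⊆ {0} := fun x hx => h x hx
    have hcls : closure Y ⊆ {0} := closure_minimal hY0 isClosed_singleton
    have : Subsingleton X := by
      constructor
      intro a b
      have ha := hcls (hYdense a)
      have hb := hcls (hYdense b)
      simp_all
    exact hinfdim inferInstance
  obtain ⟨c, hc, hbound⟩ := h2 f hfY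
  have hnf : 0 < ‖f‖ := norm_pos_iff.mpr hf0
  have hA : ∀ j : ℕ, 0 < j → ‖A^[j] f‖ ≤ c * α ^ j :=
    fun j hj => le_trans (le_max_left _ _) (hbound j hj)
  have hB : ∀ j : ℕ, 0 < j → ‖B^[j] f‖ ≤ c * α ^ j :=
    fun j hj => le_trans (le_max_right _ _) (hbound j hj)
  have main : ∀ γ : ℝ, α < γ → γ < 1 →
      ∃ M : ℕ, 0 < M ∧ ∀ n ≥ M, ∀ l : ℂ, γ ^ n ≤ ‖l‖ → ‖l‖ ≤ 1 / γ ^ n →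
        l ∈ pointSpecPow A (D : Set X) n := by
    intro γ hαγ hγ1
    have hγ0 : 0 < γ := lt_trans hα0 hαγ
    set r : ℝ := α / γ with hrdef
    have hr0 : 0 < r := div_pos hα0 hγ0
    have hr1 : r < 1 := (div_lt_one hγ0).mpr hαγ
    have hεpos : 0 < ‖f‖ / (2 * c + ‖f‖) := by positivity
    obtain ⟨M₀, hM₀⟩ := exists_pow_lt_of_lt_one hεpos hr1
    refine ⟨max M₀ 1, lt_of_lt_of_le one_pos (le_max_right _ _), ?_⟩
    intro n hn l hl1 hl2
    have hn1 : 1 ≤ n := le_trans (le_max_right _ _) hn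
    have hn0 : 0 < n := hn1
    have hrnM : r ^ n ≤ r ^ M₀ :=
      pow_le_pow_of_le_one hr0.le hr1.le (le_trans (le_max_left _ _) hn)
    have hsmall : r ^ n * (2 * c + ‖f‖) < ‖f‖ := by
      have h3 : r ^ n < ‖f‖ / (2 * c + ‖f‖) := lt_of_le_of_lt hrnM hM₀
      have h4 : 0 < 2 * c + ‖f‖ := by positivity
      calc r ^ n * (2 * c + ‖f‖) < ‖f‖ / (2 * c + ‖f‖) * (2 * c + ‖f‖) :=
            mul_lt_mul_of_pos_right h3 h4
        _ = ‖f‖ := div_mul_cancel₀ _ (ne_of_gt h4)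
    have hrn0 : (0:ℝ) ≤ r ^ n := le_of_lt (pow_pos hr0 n)
    have hrn1 : r ^ n < 1 := pow_lt_one₀ hr0.le hr1 (Nat.one_le_iff_ne_zero.mp hn1)
    have hγn : 0 < γ ^ n := pow_pos hγ0 n
    have hl0 : l ≠ 0 := by
      intro h
      rw [h, norm_zero] at hl1
      exact absurd hl1 (not_le.mpr hγn)
    have hlpos : 0 < ‖l‖ := lt_of_lt_of_le hγn hl1
    have hlinv : ‖l‖⁻¹ ≤ (γ ^ n)⁻¹ := inv_anti₀ hγn hl1
    have hlup : ‖l‖ ≤ (γ ^ n)⁻¹ := by rwa [one_div] at hl2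
    have hid : ∀ i : ℕ, ((γ ^ n)⁻¹) ^ i * α ^ (n * i) = (r ^ n) ^ i := by
      intro i
      rw [hrdef, div_pow, div_pow, pow_mul α n i]
      field_simp
      rw [one_div, inv_pow, inv_mul_cancel₀ (by positivity)]
    have htermA : ∀ i : ℕ, 0 < i → ‖(l⁻¹) ^ i • A^[n*i] f‖ ≤ c * (r ^ n) ^ i := by
      intro i hi
      rw [norm_smul, norm_pow, norm_inv]
      have hni : 0 < n * i := Nat.mul_pos hn0 hi
      calc ‖l‖⁻¹ ^ i * ‖A^[n*i] f‖ ≤ ((γ ^ n)⁻¹) ^ i * (c * α ^ (n*i)) := by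
            gcongr
            exact hA _ hni
        _ = c * (((γ ^ n)⁻¹) ^ i * α ^ (n*i)) := by ring
        _ = c * (r ^ n) ^ i := by rw [hid]
    have htermB : ∀ i : ℕ, 0 < i → ‖l ^ i • B^[n*i] f‖ ≤ c * (r ^ n) ^ i := by
      intro i hi
      rw [norm_smul, norm_pow]
      have hni : 0 < n * i := Nat.mul_pos hn0 hi
      calc ‖l‖ ^ i * ‖B^[n*i] f‖ ≤ ((γ ^ n)⁻¹) ^ i * (c * α ^ (n*i)) := by
            gcongr
            exact hB _ hni
        _ = c * (((γ ^ n)⁻¹) ^ i * α ^ (n*i)) := by ring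
        _ = c * (r ^ n) ^ i := by rw [hid]
    set w : ℕ → X := fun k =>
      (l⁻¹)^(k+1) • A^[n*(k+1)] f + l^(k+1) • B^[n*(k+1)] f with hwdef
    have hwb : ∀ k : ℕ, ‖w k‖ ≤ 2*c*(r^n) * (r^n)^k := by
      intro k
      calc ‖w k‖ ≤ ‖(l⁻¹)^(k+1) • A^[n*(k+1)] f‖ + ‖l^(k+1) • B^[n*(k+1)] f‖ :=
            norm_add_le _ _
        _ ≤ c * (r^n)^(k+1) + c * (r^n)^(k+1) :=
            add_le_add (htermA (k+1) k.succ_pos) (htermB (k+1) k.succ_pos)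
        _ = 2*c*(r^n) * (r^n)^k := by rw [pow_succ']; ring
    have hsumgeo : Summable (fun k : ℕ => 2*c*(r^n) * (r^n)^k) :=
      (summable_geometric_of_lt_one hrn0 hrn1).mul_left _
    have hsum : Summable w := Summable.of_norm_bounded hsumgeo hwb
    have htnorm : ‖∑' k, w k‖ < ‖f‖ := by
      have h7 : ‖∑' k, w k‖ ≤ ∑' k : ℕ, 2*c*(r^n) * (r^n)^k :=
        tsum_of_norm_bounded hsumgeo.hasSum hwb
      have h8 : (∑' k : ℕ, 2*c*(r^n) * (r^n)^k) = 2*c*(r^n) * (1 - r^n)⁻¹ := by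
        rw [tsum_mul_left, tsum_geometric_of_lt_one hrn0 hrn1]
      have h9 : 0 < 1 - r^n := by linarith
      have h10 : 2*c*(r^n) * (1 - r^n)⁻¹ < ‖f‖ := by
        rw [← div_eq_mul_inv, div_lt_iff₀ h9]
        nlinarith [hsmall]
      calc ‖∑' k, w k‖ ≤ _ := h7
        _ = _ := h8
        _ < ‖f‖ := h10
    have hg0 : f + ∑' k, w k ≠ 0 := by
      intro h
      have h9 : ∑' k, w k = -f := by
        have := eq_neg_of_add_eq_zero_right h
        exact this
      rw [h9, norm_neg] at htnorm
      exact lt_irrefl _ htnorm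
    have ht1 : Filter.Tendsto (fun m : ℕ => (l⁻¹)^m • A^[n*(m+1)] f)
        Filter.atTop (nhds 0) := by
      have hb : ∀ m : ℕ, ‖(l⁻¹)^m • A^[n*(m+1)] f‖ ≤ (c * α^n) * (r^n)^m := by
        intro m
        rw [norm_smul, norm_pow, norm_inv]
        calc ‖l‖⁻¹^m * ‖A^[n*(m+1)] f‖ ≤ ((γ^n)⁻¹)^m * (c * α^(n*(m+1))) := by
              gcongr
              exact hA _ (Nat.mul_pos hn0 m.succ_pos)
          _ = (c * α^n) * (((γ^n)⁻¹)^m * α^(n*m)) := by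
              rw [show n*(m+1) = n*m + n from by ring, pow_add]; ring
          _ = (c * α^n) * (r^n)^m := by rw [hid]
      refine squeeze_zero_norm hb ?_
      simpa using (tendsto_pow_atTop_nhds_zero_of_lt_one hrn0 hrn1).const_mul (c*α^n)
    have ht2 : Filter.Tendsto (fun m : ℕ => l^(m+1) • B^[n*m] f)
        Filter.atTop (nhds 0) := by
      have hb : ∀ᶠ m : ℕ in Filter.atTop,
          ‖l^(m+1) • B^[n*m] f‖ ≤ (c * (γ^n)⁻¹) * (r^n)^m := by
        filter_upwards [Filter.eventually_ge_atTop 1] with m hm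
        rw [norm_smul, norm_pow]
        calc ‖l‖^(m+1) * ‖B^[n*m] f‖ ≤ ((γ^n)⁻¹)^(m+1) * (c * α^(n*m)) := by
              gcongr
              exact hB _ (Nat.mul_pos hn0 hm)
          _ = (c * (γ^n)⁻¹) * (((γ^n)⁻¹)^m * α^(n*m)) := by rw [pow_succ']; ring
          _ = (c * (γ^n)⁻¹) * (r^n)^m := by rw [hid]
      refine squeeze_zero_norm' hb ?_
      simpa using (tendsto_pow_atTop_nhds_zero_of_lt_one hrn0 hrn1).const_mul (c*(γ^n)⁻¹)
    obtain ⟨hdom, heq⟩ := eigen_core hlin hYsub hBmaps h1 hfY (hcl n hn0) l hl0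
      hsum ht1 ht2
    exact ⟨f + ∑' k, w k, hg0, hdom, heq⟩
  refine ⟨main, ?_⟩
  intro l hl1 hl2
  obtain ⟨M, hM, hspec⟩ := main ((α+1)/2) (by linarith) (by linarith)
  have hγ0 : (0:ℝ) < (α+1)/2 := by linarith
  have hγ1 : (α+1)/2 < 1 := by linarith
  have hlpos : 0 < ‖l‖ := lt_trans hα0 hl1
  have h10 : ∀ᶠ n : ℕ in Filter.atTop, ((α+1)/2)^n < ‖l‖ :=
    (tendsto_pow_atTop_nhds_zero_of_lt_one hγ0.le hγ1).eventually_lt_const hlpos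
  have h11 : ∀ᶠ n : ℕ in Filter.atTop, ((α+1)/2)^n < ‖l‖⁻¹ :=
    (tendsto_pow_atTop_nhds_zero_of_lt_one hγ0.le hγ1).eventually_lt_const
      (inv_pos.mpr hlpos)
  obtain ⟨N, hN⟩ := Filter.eventually_atTop.mp (h10.and h11)
  refine ⟨max M N, lt_of_lt_of_le hM (le_max_left _ _), ?_⟩
  intro n hn
  obtain ⟨hg1, hg2⟩ := hN n (le_trans (le_max_right _ _) hn)
  have hγn : (0:ℝ) < ((α+1)/2)^n := pow_pos hγ0 n
  have hup : ‖l‖ ≤ 1 / ((α+1)/2)^n := by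
    rw [le_div_iff₀ hγn]
    calc ‖l‖ * ((α+1)/2)^n ≤ ‖l‖ * ‖l‖⁻¹ :=
          mul_le_mul_of_nonneg_left hg2.le (norm_nonneg l)
      _ = 1 := mul_inv_cancel₀ (ne_of_gt hlpos)
  exact hspec n (le_trans (le_max_left _ _) hn) l hg1.le hup
end

section
/- Spectral properties, part 4: Let X be a complex infinite-dimensional separable Banach space and let A be a densely defined linear operator in X such that every power A^n (n ∈ ℕ) is a closed operator, and suppose there exist a set Y ⊆ C^∞(A) dense in X and a mapping B : Y → Y with ABf = f for every f ∈ Y, such that (a) Y ⊆ ⋃_{n≥1} ker A^n (i.e., for every f ∈ Y there is N with A^n f = 0 for all n ≥ N), and (b) for every f ∈ Y there exist α = α(f) ∈ (0,1) and c > 0 with ‖B^n f‖ ≤ c·α^n for all n ∈ ℕ. Then for every f ∈ Y \ {0} and every R ∈ (1, 1/r(B,f)) (with 1/0 := ∞) there exists M ∈ ℕ such that for all n ≥ M the closed disk {λ ∈ ℂ : |λ| ≤ R^n} is contained in σ_p(A^n); in particular, every λ ∈ ℂ with |λ| < 1/r(B,f) is an eigenvalue of A^n for all sufficiently large n. -/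
open Filter Topology TopologicalSpace

section Aux

variable {X : Type*} [NormedAddCommGroup X] [NormedSpace ℂ X]
variable {D : Submodule ℂ X} {A : X → X}

lemma aux_A_zero (hlin : IsLinearOn ℂ A (D : Set X)) : A (0:X) = 0 := by
  have h := hlin.2 (0:ℂ) 0 D.zero_mem
  simpa using h

lemma aux_iter_zero (hlin : IsLinearOn ℂ A (D : Set X)) (k : ℕ) :
    A^[k] (0:X) = 0 := by
  induction k with
  | zero => simp
  | succ k ih => rw [Function.iterate_succ_apply', ih, aux_A_zero hlin]

lemma aux_cinf_zero (hlin : IsLinearOn ℂ A (D : Set X)) :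
    (0:X) ∈ opCinf A (D : Set X) := by
  intro k; rw [aux_iter_zero hlin]; exact D.zero_mem

lemma aux_iter_add (hlin : IsLinearOn ℂ A (D : Set X)) {x y : X}
    (hx : x ∈ opCinf A (D : Set X)) (hy : y ∈ opCinf A (D : Set X)) (k : ℕ) :
    A^[k] (x + y) = A^[k] x + A^[k] y := by
  induction k with
  | zero => simp
  | succ k ih =>
    rw [Function.iterate_succ_apply', Function.iterate_succ_apply',
      Function.iterate_succ_apply', ih, hlin.1 _ (hx k) _ (hy k)]

lemma aux_cinf_add (hlin : IsLinearOn ℂ A (D : Set X)) {x y : X}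
    (hx : x ∈ opCinf A (D : Set X)) (hy : y ∈ opCinf A (D : Set X)) :
    x + y ∈ opCinf A (D : Set X) := by
  intro k; rw [aux_iter_add hlin hx hy]; exact D.add_mem (hx k) (hy k)

lemma aux_iter_smul (hlin : IsLinearOn ℂ A (D : Set X)) (c : ℂ) {x : X}
    (hx : x ∈ opCinf A (D : Set X)) (k : ℕ) :
    A^[k] (c • x) = c • A^[k] x := by
  induction k with
  | zero => simp
  | succ k ih =>
    rw [Function.iterate_succ_apply', Function.iterate_succ_apply', ih,
      hlin.2 c _ (hx k)]

lemma aux_cinf_smul (hlin : IsLinearOn ℂ A (D : Set X)) (c : ℂ) {x : X}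
    (hx : x ∈ opCinf A (D : Set X)) :
    c • x ∈ opCinf A (D : Set X) := by
  intro k; rw [aux_iter_smul hlin c hx]; exact D.smul_mem c (hx k)

lemma aux_cinf_sum (hlin : IsLinearOn ℂ A (D : Set X)) (u : ℕ → X)
    (hu : ∀ j, u j ∈ opCinf A (D : Set X)) (s : Finset ℕ) :
    (∑ j ∈ s, u j) ∈ opCinf A (D : Set X) ∧
      ∀ k, A^[k] (∑ j ∈ s, u j) = ∑ j ∈ s, A^[k] (u j) := by
  classical
  induction s using Finset.induction with
  | empty => simpa using ⟨aux_cinf_zero hlin, fun k => aux_iter_zero hlin k⟩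
  | insert _ _ hj ih =>
    rename_i a s'
    rw [Finset.sum_insert hj]
    refine ⟨aux_cinf_add hlin (hu a) ih.1, fun k => ?_⟩
    rw [aux_iter_add hlin (hu a) ih.1, ih.2 k, Finset.sum_insert hj]

lemma aux_AB {Y : Set X} {B : X → X} (hBmaps : Set.MapsTo B Y Y)
    (h1 : ∀ f ∈ Y, A (B f) = f) {f : X} (hf : f ∈ Y) :
    ∀ i m, i ≤ m → A^[i] (B^[m] f) = B^[m - i] f := by
  intro i
  induction i with
  | zero => intro m _; simp
  | succ i ih =>
    intro m him
    have hm1 : 1 ≤ m := le_trans (Nat.succ_le_succ (Nat.zero_le i)) him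
    have hstep : A (B^[m] f) = B^[m-1] f := by
      have : B^[m] f = B (B^[m-1] f) := by
        conv_lhs => rw [show m = (m-1) + 1 by omega]
        rw [Function.iterate_succ_apply']
      rw [this, h1 _ (hBmaps.iterate (m-1) hf)]
    rw [Function.iterate_succ_apply, hstep, ih (m-1) (by omega)]
    congr 1
    omega

lemma aux_bound_of_limsup (B : X → X) (f : X) {s : ℝ} (hs : 0 < s)
    (h : orbitRad B f < ENNReal.ofReal s) :
    ∃ M : ℕ, ∀ m ≥ max M 1, ‖B^[m] f‖ ≤ s ^ m := by
  have hev := Filter.eventually_lt_of_limsup_lt h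
  rw [Filter.eventually_atTop] at hev
  obtain ⟨M, hM⟩ := hev
  refine ⟨M, fun m hm => ?_⟩
  have hm1 : (1:ℕ) ≤ m := le_trans (le_max_right M 1) hm
  have hmn : (m:ℝ) ≠ 0 := by positivity
  have h1 := hM m (le_trans (le_max_left M 1) hm)
  have h2 : ((‖B^[m] f‖₊ : ENNReal) ^ (1/(m:ℝ))) ^ (m:ℝ)
      ≤ (ENNReal.ofReal s) ^ (m:ℝ) := ENNReal.rpow_le_rpow h1.le (by positivity)
  rw [← ENNReal.rpow_mul, one_div, inv_mul_cancel₀ hmn, ENNReal.rpow_one,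
    ENNReal.ofReal_rpow_of_pos hs, Real.rpow_natCast] at h2
  rw [(show ((‖B^[m] f‖₊ : ENNReal)) = ENNReal.ofReal ‖B^[m] f‖ from (ofReal_norm _).symm)] at h2
  exact (ENNReal.ofReal_le_ofReal_iff (by positivity)).mp h2

lemma aux_limsup_le (B : X → X) (f : X) {s : ℝ} (hs : 0 < s) (M : ℕ)
    (h : ∀ m ≥ M, ‖B^[m] f‖ ≤ s ^ m) : orbitRad B f ≤ ENNReal.ofReal s := by
  refine Filter.limsup_le_of_le (by isBoundedDefault) ?_
  filter_upwards [Filter.eventually_ge_atTop (max M 1)] with m hm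
  have hm1 : (1:ℕ) ≤ m := le_trans (le_max_right M 1) hm
  have hmn : (m:ℝ) ≠ 0 := by positivity
  have h1 : (‖B^[m] f‖₊ : ENNReal) ≤ ENNReal.ofReal (s ^ m) := by
    rw [(show ((‖B^[m] f‖₊ : ENNReal)) = ENNReal.ofReal ‖B^[m] f‖ from (ofReal_norm _).symm)]
    exact ENNReal.ofReal_le_ofReal (h m (le_trans (le_max_left M 1) hm))
  calc (‖B^[m] f‖₊ : ENNReal) ^ (1/(m:ℝ))
      ≤ (ENNReal.ofReal (s ^ m)) ^ (1/(m:ℝ)) :=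
        ENNReal.rpow_le_rpow h1 (by positivity)
    _ = ENNReal.ofReal s := by
        rw [← Real.rpow_natCast s m, ← ENNReal.ofReal_rpow_of_pos hs,
          ← ENNReal.rpow_mul, mul_one_div, div_self hmn, ENNReal.rpow_one]

end Aux
/-- **Spectral properties, part 4.** -/
theorem spectral_properties_part4
    {X : Type*} [NormedAddCommGroup X] [NormedSpace ℂ X]
    [CompleteSpace X] [SeparableSpace X]
    (hinfdim : ¬ FiniteDimensional ℂ X)
    (D : Submodule ℂ X) (A : X → X)
    (hlin : IsLinearOn ℂ A (D : Set X))
    (hdd : Dense (D : Set X))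
    (hcl : ∀ n : ℕ, 0 < n → ClosedPower A (D : Set X) n)
    (Y : Set X) (hYsub : Y ⊆ opCinf A (D : Set X)) (hYdense : Dense Y)
    (B : X → X) (hBmaps : Set.MapsTo B Y Y)
    (h1 : ∀ f ∈ Y, A (B f) = f)
    (h2a : ∀ f ∈ Y, ∃ N : ℕ, ∀ n ≥ N, A^[n] f = 0)
    (h2b : ∀ f ∈ Y, ∃ α ∈ Set.Ioo (0 : ℝ) 1, ∃ c > 0, ∀ n : ℕ, 0 < n →
      ‖B^[n] f‖ ≤ c * α ^ n) :
    (∀ f ∈ Y, f ≠ 0 → ∀ R : ℝ,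
      1 < R → ENNReal.ofReal R < (orbitRad B f)⁻¹ →
      ∃ M : ℕ, 0 < M ∧ ∀ n ≥ M, ∀ l : ℂ, ‖l‖ ≤ R ^ n →
        l ∈ pointSpecPow A (D : Set X) n) ∧
    (∀ f ∈ Y, f ≠ 0 → ∀ l : ℂ, ENNReal.ofReal ‖l‖ < (orbitRad B f)⁻¹ →
      ∃ M : ℕ, 0 < M ∧ ∀ n ≥ M, l ∈ pointSpecPow A (D : Set X) n) := by
  have key : ∀ f ∈ Y, f ≠ 0 → ∀ R : ℝ,
      1 < R → ENNReal.ofReal R < (orbitRad B f)⁻¹ →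
      ∃ M : ℕ, 0 < M ∧ ∀ n ≥ M, ∀ l : ℂ, ‖l‖ ≤ R ^ n →
        l ∈ pointSpecPow A (D : Set X) n := by
    intro f hf hf0 R hR1 hRr
    have hR0 : (0:ℝ) < R := lt_trans one_pos hR1
    -- orbitRad B f < ofReal (R⁻¹)
    have hrlt : orbitRad B f < ENNReal.ofReal R⁻¹ := by
      rw [ENNReal.ofReal_inv_of_pos hR0]
      exact ENNReal.lt_inv_iff_lt_inv.mp hRr
    have hrtop : orbitRad B f ≠ ⊤ := hrlt.ne_top
    have hsr : (orbitRad B f).toReal < R⁻¹ :=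
      (ENNReal.lt_ofReal_iff_toReal_lt hrtop).mp hrlt
    set s : ℝ := ((orbitRad B f).toReal + R⁻¹) / 2 with hs_def
    have hs0 : 0 < s := by
      have := ENNReal.toReal_nonneg (a := orbitRad B f)
      have : (0:ℝ) < R⁻¹ := by positivity
      simp only [hs_def]
      positivity
    have hsR : s < R⁻¹ := by
      have := ENNReal.toReal_nonneg (a := orbitRad B f)
      simp only [hs_def]; linarith
    have hrs : orbitRad B f < ENNReal.ofReal s := by
      rw [ENNReal.lt_ofReal_iff_toReal_lt hrtop]
      simp only [hs_def]; linarith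
    obtain ⟨M₀, hM₀⟩ := aux_bound_of_limsup B f hs0 hrs
    set M₁ : ℕ := max M₀ 1 with hM₁_def
    set t : ℝ := R * s with ht_def
    have ht0 : 0 < t := by positivity
    have ht1 : t < 1 := by
      have : R * s < R * R⁻¹ := by
        exact (mul_lt_mul_iff_right₀ hR0).mpr hsR
      rwa [mul_inv_cancel₀ hR0.ne'] at this
    have hf_norm : (0:ℝ) < ‖f‖ := norm_pos_iff.mpr hf0
    have hfrac : (0:ℝ) < ‖f‖ / (1 + ‖f‖) := by positivity
    obtain ⟨M₂, hM₂⟩ := exists_pow_lt_of_lt_one hfrac ht1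
    obtain ⟨N, hN⟩ := h2a f hf
    refine ⟨max (max N M₁) (M₂ + 1), by positivity, ?_⟩
    intro n hn l hl
    have hnN : N ≤ n := le_trans (le_trans (le_max_left _ _) (le_max_left _ _)) hn
    have hnM₁ : M₁ ≤ n := le_trans (le_trans (le_max_right _ _) (le_max_left _ _)) hn
    have hnM₂ : M₂ + 1 ≤ n := le_trans (le_max_right _ _) hn
    have hn1 : 1 ≤ n := le_trans (le_trans (le_max_right _ _) hnM₁) (le_refl n)
    set u : ℕ → X := fun j => l ^ j • B^[n * j] f with hu_def
    have hu_mem : ∀ j, u j ∈ opCinf A (D : Set X) := fun j =>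
      aux_cinf_smul hlin _ (hYsub (hBmaps.iterate (n * j) hf))
    have hu0 : u 0 = f := by simp [hu_def]
    -- norm bound for j ≥ 1
    set q : ℝ := t ^ n with hq_def
    have hq0 : (0:ℝ) ≤ q := by positivity
    have hq1 : q < 1 := pow_lt_one₀ ht0.le ht1 (by omega)
    have hub : ∀ j, 1 ≤ j → ‖u j‖ ≤ q ^ j := by
      intro j hj
      have hBb : ‖B^[n * j] f‖ ≤ s ^ (n * j) := by
        apply hM₀
        calc M₁ ≤ n := hnM₁
          _ ≤ n * j := Nat.le_mul_of_pos_right n (by omega)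
      have hlj : ‖l ^ j‖ ≤ (R ^ n) ^ j := by
        rw [norm_pow]
        exact pow_le_pow_left₀ (norm_nonneg l) hl j
      calc ‖u j‖ = ‖l ^ j‖ * ‖B^[n * j] f‖ := norm_smul _ _
        _ ≤ (R ^ n) ^ j * s ^ (n * j) := by
            apply mul_le_mul hlj hBb (norm_nonneg _) (by positivity)
        _ = q ^ j := by
            simp only [hq_def, ht_def]; rw [pow_mul s n j, ← mul_pow, mul_pow R s n]
    -- summability
    have hbnd : ∀ j, ‖u j‖ ≤ (max ‖f‖ 1) * q ^ j := by
      intro j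
      rcases Nat.eq_zero_or_pos j with hj | hj
      · subst hj
        simp only [hu0, pow_zero, mul_one]
        exact le_max_left _ _
      · calc ‖u j‖ ≤ q ^ j := hub j hj
          _ = 1 * q ^ j := (one_mul _).symm
          _ ≤ (max ‖f‖ 1) * q ^ j := by
              apply mul_le_mul_of_nonneg_right (le_max_right _ _) (by positivity)
    have hnorm : Summable (fun j => ‖u j‖) :=
      Summable.of_nonneg_of_le (fun j => norm_nonneg _) hbnd
        (((summable_geometric_of_lt_one hq0 hq1).mul_left _))
    have hsum : Summable u := hnorm.of_norm
    set g : X := ∑' j, u j with hg_def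
    -- ‖g - f‖ ≤ q/(1-q)
    have hsum1norm : Summable (fun j => ‖u (j + 1)‖) :=
      hnorm.comp_injective (add_left_injective 1)
    have hsum1 : Summable (fun j => u (j + 1)) := hsum1norm.of_norm
    have hgf : g - f = ∑' j, u (j + 1) := by
      rw [hg_def, hsum.tsum_eq_zero_add, hu0]
      abel
    have hsumq : Summable (fun j : ℕ => q ^ (j+1)) := by
      simpa [pow_succ'] using (summable_geometric_of_lt_one hq0 hq1).mul_left q
    have hgf_norm : ‖g - f‖ ≤ q * (1 - q)⁻¹ := by
      rw [hgf]
      calc ‖∑' j, u (j + 1)‖ ≤ ∑' j, ‖u (j + 1)‖ :=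
            norm_tsum_le_tsum_norm hsum1norm
        _ ≤ ∑' j : ℕ, q ^ (j + 1) := by
            apply Summable.tsum_le_tsum _ hsum1norm hsumq
            intro j; exact hub (j+1) (by omega)
        _ = q * (1 - q)⁻¹ := by
            simp only [pow_succ']
            rw [tsum_mul_left, tsum_geometric_of_lt_one hq0 hq1]
    have hqsmall : q < ‖f‖ / (1 + ‖f‖) := by
      calc q = t ^ n := hq_def
        _ ≤ t ^ (M₂ + 1) := pow_le_pow_of_le_one ht0.le ht1.le hnM₂
        _ ≤ t ^ M₂ := pow_le_pow_of_le_one ht0.le ht1.le (by omega)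
        _ < ‖f‖ / (1 + ‖f‖) := hM₂
    have htail : q * (1 - q)⁻¹ < ‖f‖ := by
      have h1q : (0:ℝ) < 1 - q := by linarith
      rw [lt_div_iff₀ (by positivity)] at hqsmall
      rw [← div_eq_mul_inv, div_lt_iff₀ h1q]
      nlinarith
    have hg0 : g ≠ 0 := by
      intro h0
      have : ‖g - f‖ = ‖f‖ := by rw [h0]; simp
      linarith [lt_of_le_of_lt hgf_norm htail, this]
    -- partial sums and closedness
    set S : ℕ → X := fun J => ∑ j ∈ Finset.range J, u j with hS_def
    have hS_mem : ∀ J, S J ∈ opCinf A (D : Set X) := fun J =>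
      (aux_cinf_sum hlin u hu_mem _).1
    have hS_tend : Filter.Tendsto S Filter.atTop (nhds g) :=
      hsum.hasSum.tendsto_sum_nat
    have hAu : ∀ j, 1 ≤ j → A^[n] (u j) = l ^ j • B^[n * (j - 1)] f := by
      intro j hj
      rw [hu_def]
      simp only
      rw [aux_iter_smul hlin _ (hYsub (hBmaps.iterate (n * j) hf)),
        aux_AB hBmaps h1 hf n (n * j) (Nat.le_mul_of_pos_right n (by omega))]
      congr 2
      cases j with
      | zero => omega
      | succ j => simp [Nat.mul_sub_one]; ring_nf; omega
    have hAu0 : A^[n] (u 0) = 0 := by rw [hu0]; exact hN n hnN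
    have hAS : ∀ J, A^[n] (S (J + 1)) = l • S J := by
      intro J
      rw [hS_def]
      simp only
      rw [(aux_cinf_sum hlin u hu_mem _).2 n, Finset.sum_range_succ']
      rw [hAu0, add_zero, Finset.smul_sum]
      apply Finset.sum_congr rfl
      intro j _
      rw [hAu (j + 1) (by omega)]
      simp only [Nat.add_sub_cancel, hu_def]
      rw [pow_succ', mul_smul]
    -- pass to the limit using closedness of Aⁿ
    have hclosed := hcl n (by omega)
    have hmemG : ∀ J, (S (J+1), l • S J) ∈
        {p : X × X | p.1 ∈ opDom A (D : Set X) n ∧ p.2 = A^[n] p.1} := by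
      intro J
      exact ⟨fun k _ => hS_mem (J+1) k, (hAS J).symm⟩
    have htend : Filter.Tendsto (fun J => (S (J+1), l • S J)) Filter.atTop
        (nhds (g, l • g)) := by
      apply Filter.Tendsto.prodMk_nhds
      · exact hS_tend.comp (Filter.tendsto_add_atTop_nat 1)
      · exact hS_tend.const_smul l
    have hlim := hclosed.mem_of_tendsto htend
      (Filter.Eventually.of_forall hmemG)
    exact ⟨g, hg0, hlim.1, hlim.2.symm⟩
  refine ⟨key, ?_⟩
  -- part 2
  intro f hf hf0 l _
  obtain ⟨α, hα, c, hc, hbd⟩ := h2b f hf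
  set β : ℝ := (1 + α) / 2 with hβ_def
  have hβ0 : 0 < β := by simp only [hβ_def]; linarith [hα.1]
  have hβ1 : β < 1 := by simp only [hβ_def]; linarith [hα.2]
  have hαβ : α < β := by simp only [hβ_def]; linarith [hα.2]
  -- eventually c * α^m ≤ β^m
  have hratio : Filter.Tendsto (fun m : ℕ => c * (α / β) ^ m)
      Filter.atTop (nhds 0) := by
    rw [show (0:ℝ) = c * 0 by ring]
    exact (tendsto_pow_atTop_nhds_zero_of_lt_one (div_nonneg hα.1.le hβ0.le)
      ((div_lt_one hβ0).mpr hαβ)).const_mul c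
  have hev : ∀ᶠ m : ℕ in Filter.atTop, c * (α / β) ^ m ≤ 1 :=
    hratio.eventually (eventually_le_nhds one_pos)
  rw [Filter.eventually_atTop] at hev
  obtain ⟨M', hM'⟩ := hev
  have hbound : ∀ m ≥ max M' 1, ‖B^[m] f‖ ≤ β ^ m := by
    intro m hm
    have h1' := hbd m (by omega)
    have h2' := hM' m (le_trans (le_max_left _ _) hm)
    calc ‖B^[m] f‖ ≤ c * α ^ m := h1'
      _ = (c * (α / β) ^ m) * β ^ m := by
          rw [div_pow]; field_simp
      _ ≤ 1 * β ^ m := by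
          apply mul_le_mul_of_nonneg_right h2' (pow_nonneg hβ0.le m)
      _ = β ^ m := one_mul _
  have hrle : orbitRad B f ≤ ENNReal.ofReal β :=
    aux_limsup_le B f hβ0 (max M' 1) hbound
  set γ : ℝ := (1 + β⁻¹) / 2 with hγ_def
  have hβinv : 1 < β⁻¹ := (one_lt_inv₀ hβ0).mpr hβ1
  have hγ1 : 1 < γ := by simp only [hγ_def]; linarith
  have hγβ : γ < β⁻¹ := by simp only [hγ_def]; linarith
  have hγr : ENNReal.ofReal γ < (orbitRad B f)⁻¹ := by
    calc ENNReal.ofReal γ < ENNReal.ofReal β⁻¹ :=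
          (ENNReal.ofReal_lt_ofReal_iff (inv_pos.mpr hβ0)).mpr hγβ
      _ = (ENNReal.ofReal β)⁻¹ := ENNReal.ofReal_inv_of_pos hβ0
      _ ≤ (orbitRad B f)⁻¹ := ENNReal.inv_le_inv.mpr hrle
  obtain ⟨M, hM0, hM⟩ := key f hf hf0 γ hγ1 hγr
  obtain ⟨M₁, hM₁⟩ := pow_unbounded_of_one_lt ‖l‖ hγ1
  refine ⟨max M M₁, lt_of_lt_of_le hM0 (le_max_left _ _), ?_⟩
  intro n hn
  apply hM n (le_trans (le_max_left _ _) hn) l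
  calc ‖l‖ ≤ γ ^ M₁ := hM₁.le
    _ ≤ γ ^ n := pow_le_pow_right₀ hγ1.le (le_trans (le_max_right _ _) hn)
end

section
/- Spectral properties, part 5: Let X be a complex infinite-dimensional separable Banach space and let A be a densely defined linear operator in X such that every power A^n (n ∈ ℕ) is a closed operator, and suppose there exist a set Y ⊆ C^∞(A) dense in X and a mapping B : Y → Y with ABf = f for every f ∈ Y, such that (a) Y ⊆ ⋃_{n≥1} ker A^n, and (b) there is a single α ∈ (0,1) such that for every f ∈ Y there exists c = c(f,α) > 0 with ‖B^n f‖ ≤ c·α^n for all n ∈ ℕ. Then for every γ ∈ (α, 1) there exists M ∈ ℕ such that for all n ≥ M the closed disk {λ ∈ ℂ : |λ| ≤ 1/γ^n} is contained in σ_p(A^n); in particular, every λ ∈ ℂ with |λ| < 1/α is an eigenvalue of A^n for all sufficiently large n. -/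
open Filter Topology TopologicalSpace

/-- **Spectral properties, part 5.** -/
theorem spectral_properties_part5
    {X : Type*} [NormedAddCommGroup X] [NormedSpace ℂ X]
    [CompleteSpace X] [SeparableSpace X]
    (hinfdim : ¬ FiniteDimensional ℂ X)
    (D : Submodule ℂ X) (A : X → X)
    (hlin : IsLinearOn ℂ A (D : Set X))
    (hdd : Dense (D : Set X))
    (hcl : ∀ n : ℕ, 0 < n → ClosedPower A (D : Set X) n)
    (Y : Set X) (hYsub : Y ⊆ opCinf A (D : Set X)) (hYdense : Dense Y)
    (B : X → X) (hBmaps : Set.MapsTo B Y Y)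
    (h1 : ∀ f ∈ Y, A (B f) = f)
    (h2a : ∀ f ∈ Y, ∃ N : ℕ, ∀ n ≥ N, A^[n] f = 0)
    (α : ℝ) (hα : α ∈ Set.Ioo (0 : ℝ) 1)
    (h2b : ∀ f ∈ Y, ∃ c > 0, ∀ n : ℕ, 0 < n → ‖B^[n] f‖ ≤ c * α ^ n) :
    (∀ γ : ℝ, α < γ → γ < 1 →
      ∃ M : ℕ, 0 < M ∧ ∀ n ≥ M, ∀ l : ℂ, ‖l‖ ≤ 1 / γ ^ n →
        l ∈ pointSpecPow A (D : Set X) n) ∧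
    (∀ l : ℂ, ‖l‖ < 1 / α →
      ∃ M : ℕ, 0 < M ∧ ∀ n ≥ M, l ∈ pointSpecPow A (D : Set X) n) := by

  obtain ⟨hadd, hsmul⟩ := hlin
  have hA0 : A 0 = 0 := by
    have h := hsmul 0 0 D.zero_mem
    simpa using h
  have hit0 : ∀ k : ℕ, A^[k] (0 : X) = 0 := by
    intro k
    induction k with
    | zero => simp
    | succ k ih => rw [Function.iterate_succ_apply', ih, hA0]
  have cadd : ∀ x ∈ opCinf A (D : Set X), ∀ y ∈ opCinf A (D : Set X),
      ∀ k, A^[k] (x + y) = A^[k] x + A^[k] y := by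
    intro x hx y hy k
    induction k with
    | zero => simp
    | succ k ih =>
      rw [Function.iterate_succ_apply', Function.iterate_succ_apply',
        Function.iterate_succ_apply', ih]
      exact hadd _ (hx k) _ (hy k)
  have cadd_mem : ∀ x ∈ opCinf A (D : Set X), ∀ y ∈ opCinf A (D : Set X),
      x + y ∈ opCinf A (D : Set X) := by
    intro x hx y hy k
    rw [cadd x hx y hy k]
    exact D.add_mem (hx k) (hy k)
  have csmul : ∀ (c : ℂ), ∀ x ∈ opCinf A (D : Set X),
      ∀ k, A^[k] (c • x) = c • A^[k] x := by
    intro c x hx k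
    induction k with
    | zero => simp
    | succ k ih =>
      rw [Function.iterate_succ_apply', Function.iterate_succ_apply', ih]
      exact hsmul c _ (hx k)
  have csmul_mem : ∀ (c : ℂ), ∀ x ∈ opCinf A (D : Set X),
      c • x ∈ opCinf A (D : Set X) := by
    intro c x hx k
    rw [csmul c x hx k]
    exact D.smul_mem c (hx k)
  have czero : (0 : X) ∈ opCinf A (D : Set X) := by
    intro k
    rw [hit0 k]
    exact D.zero_mem
  have csum : ∀ (m : ℕ) (u : ℕ → X), (∀ i, u i ∈ opCinf A (D : Set X)) →
      (∑ i ∈ Finset.range m, u i) ∈ opCinf A (D : Set X) ∧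
      ∀ k, A^[k] (∑ i ∈ Finset.range m, u i) = ∑ i ∈ Finset.range m, A^[k] (u i) := by
    intro m u hu
    induction m with
    | zero =>
      refine ⟨by simpa using czero, fun k => by simp [hit0 k]⟩
    | succ m ih =>
      constructor
      · rw [Finset.sum_range_succ]
        exact cadd_mem _ ih.1 _ (hu m)
      · intro k
        rw [Finset.sum_range_succ, cadd _ ih.1 _ (hu m) k, ih.2 k,
          Finset.sum_range_succ]
  have hAB : ∀ f ∈ Y, ∀ j m : ℕ, A^[j] (B^[j + m] f) = B^[m] f := by
    intro f hf j
    induction j with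
    | zero => intro m; simp
    | succ j ih =>
      intro m
      have e1 : j + 1 + m = (j + m) + 1 := by ring
      rw [e1, Function.iterate_succ_apply' B, Function.iterate_succ_apply A,
        h1 _ (hBmaps.iterate (j + m) hf)]
      exact ih m
  -- a nonzero element of Y
  have hfex : ∃ f, f ∈ Y ∧ f ≠ 0 := by
    obtain ⟨x, hx⟩ : ∃ x : X, x ≠ 0 := by
      by_contra h
      push_neg at h
      have : Subsingleton X := ⟨fun a b => by rw [h a, h b]⟩
      exact hinfdim inferInstance
    obtain ⟨y, hyY, hy⟩ := Metric.mem_closure_iff.mp (hYdense x) ‖x‖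
      (norm_pos_iff.mpr hx)
    refine ⟨y, hyY, fun h => ?_⟩
    rw [h, dist_zero_right] at hy
    exact lt_irrefl _ hy
  have key : ∀ γ : ℝ, α < γ → γ < 1 →
      ∃ M : ℕ, 0 < M ∧ ∀ n ≥ M, ∀ l : ℂ, ‖l‖ ≤ 1 / γ ^ n →
        l ∈ pointSpecPow A (D : Set X) n := by
    intro γ hαγ hγ1
    obtain ⟨f, hfY, hf0⟩ := hfex
    obtain ⟨N, hN⟩ := h2a f hfY
    obtain ⟨c, hc, hcb⟩ := h2b f hfY
    have hα0 := hα.1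
    have hγ0 : (0 : ℝ) < γ := lt_trans hα0 hαγ
    set ρ : ℝ := α / γ with hρdef
    have hρ0 : 0 < ρ := div_pos hα0 hγ0
    have hρ1 : ρ < 1 := (div_lt_one hγ0).mpr hαγ
    have hfpos : 0 < ‖f‖ := norm_pos_iff.mpr hf0
    have htend : Filter.Tendsto (fun n : ℕ => c * ρ ^ n / (1 - ρ)) atTop (𝓝 0) := by
      have h0 := tendsto_pow_atTop_nhds_zero_of_lt_one hρ0.le hρ1
      have h1' := (h0.const_mul c).div_const (1 - ρ)
      simpa using h1'
    obtain ⟨M₀, hM₀⟩ := (Filter.eventually_atTop).mp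
      (htend.eventually (gt_mem_nhds hfpos))
    refine ⟨max (max N M₀) 1, lt_of_lt_of_le one_pos (le_max_right _ _), ?_⟩
    intro n hn l hl
    have hn1 : 1 ≤ n := le_trans (le_max_right _ 1) hn
    have hnN : N ≤ n := le_trans (le_trans (le_max_left N M₀) (le_max_left _ 1)) hn
    have hnM₀ : M₀ ≤ n := le_trans (le_trans (le_max_right N M₀) (le_max_left _ 1)) hn
    have hγpow : (0 : ℝ) < γ ^ n := pow_pos hγ0 n
    set r : ℝ := ‖l‖ * α ^ n with hrdef
    have hr0 : 0 ≤ r := mul_nonneg (norm_nonneg l) (pow_nonneg hα0.le n)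
    have hrρ : r ≤ ρ ^ n := by
      calc r ≤ (1 / γ ^ n) * α ^ n :=
            mul_le_mul_of_nonneg_right hl (pow_nonneg hα0.le n)
        _ = ρ ^ n := by rw [hρdef, div_pow]; ring
    have hρn1 : ρ ^ n < 1 := pow_lt_one₀ hρ0.le hρ1 (by omega)
    have hr1 : r < 1 := lt_of_le_of_lt hrρ hρn1
    set term : ℕ → X := fun k => l ^ k • B^[n * k] f with hterm
    have htermY : ∀ k, B^[n * k] f ∈ Y := fun k => hBmaps.iterate (n * k) hfY
    have htermC : ∀ k, term k ∈ opCinf A (D : Set X) := fun k =>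
      csmul_mem _ _ (hYsub (htermY k))
    have hterm0 : term 0 = f := by simp [hterm]
    have hnormb : ∀ k : ℕ, ‖term (k + 1)‖ ≤ c * r ^ (k + 1) := by
      intro k
      have hk : 0 < n * (k + 1) := by positivity
      have hb := hcb (n * (k + 1)) hk
      calc ‖term (k + 1)‖ = ‖l‖ ^ (k + 1) * ‖B^[n * (k + 1)] f‖ := by
            rw [hterm]; simp [norm_smul]
        _ ≤ ‖l‖ ^ (k + 1) * (c * α ^ (n * (k + 1))) :=
            mul_le_mul_of_nonneg_left hb (pow_nonneg (norm_nonneg l) _)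
        _ = c * r ^ (k + 1) := by
            rw [hrdef, mul_pow, ← pow_mul]; ring
    have hbound : ∀ k, ‖term k‖ ≤ (max c ‖f‖) * r ^ k := by
      intro k
      cases k with
      | zero =>
        rw [hterm0, pow_zero, mul_one]
        exact le_max_right _ _
      | succ k =>
        calc ‖term (k + 1)‖ ≤ c * r ^ (k + 1) := hnormb k
          _ ≤ (max c ‖f‖) * r ^ (k + 1) :=
              mul_le_mul_of_nonneg_right (le_max_left _ _) (pow_nonneg hr0 _)
    have hsummable : Summable term :=
      Summable.of_norm_bounded ((summable_geometric_of_lt_one hr0 hr1).mul_left _)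
        hbound
    set g : X := ∑' k, term k with hgdef
    have hg : HasSum term g := hsummable.hasSum
    set s : ℕ → X := fun m => ∑ k ∈ Finset.range m, term k with hsdef
    have hs : Filter.Tendsto s atTop (𝓝 g) := hg.tendsto_sum_nat
    have hkey : ∀ m, A^[n] (s (m + 1)) = l • s m := by
      intro m
      rw [hsdef]
      simp only
      rw [(csum (m + 1) term htermC).2 n, Finset.sum_range_succ']
      have h0 : A^[n] (term 0) = 0 := by
        rw [hterm0]
        exact hN n hnN
      have hsucc : ∀ k, A^[n] (term (k + 1)) = l • term k := by
        intro k
        have ha : A^[n] (term (k + 1)) = l ^ (k + 1) • A^[n] (B^[n * (k + 1)] f) :=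
          csmul _ _ (hYsub (htermY (k + 1))) n
        have hb : A^[n] (B^[n * (k + 1)] f) = B^[n * k] f := by
          have e : n * (k + 1) = n + n * k := by ring
          rw [e]
          exact hAB f hfY n (n * k)
        rw [ha, hb, hterm]
        simp only
        rw [smul_smul, ← pow_succ']
      simp only [hsucc, h0, add_zero]
      rw [Finset.smul_sum]
    have hGseq : IsSeqClosed {p : X × X | p.1 ∈ opDom A (D : Set X) n ∧
        p.2 = A^[n] p.1} := (hcl n (by omega)).isSeqClosed
    have hmem : ∀ m, ((s (m + 1), l • s m) : X × X) ∈
        {p : X × X | p.1 ∈ opDom A (D : Set X) n ∧ p.2 = A^[n] p.1} := by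
      intro m
      exact ⟨fun k _ => (csum (m + 1) term htermC).1 k, (hkey m).symm⟩
    have htends : Filter.Tendsto (fun m => ((s (m + 1), l • s m) : X × X)) atTop
        (𝓝 (g, l • g)) := by
      refine Filter.Tendsto.prodMk_nhds ?_ ?_
      · exact hs.comp (tendsto_add_atTop_nat 1)
      · exact hs.const_smul l
    have hglim := hGseq hmem htends
    -- g ≠ 0
    have hshift : Summable (fun k => term (k + 1)) :=
      (summable_nat_add_iff 1).mpr hsummable
    have hgf : g - f = ∑' k, term (k + 1) := by
      rw [hgdef, Summable.tsum_eq_zero_add hsummable, hterm0, add_sub_cancel_left]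
    have hgeo : HasSum (fun k : ℕ => c * r ^ (k + 1)) (c * r / (1 - r)) := by
      have h := (hasSum_geometric_of_lt_one hr0 hr1).mul_left (c * r)
      have he : (fun k : ℕ => c * r ^ (k + 1)) = fun k => (c * r) * r ^ k := by
        funext k
        rw [pow_succ']
        ring
      rw [he, div_eq_mul_inv]
      exact h
    have htail : ‖g - f‖ ≤ c * r / (1 - r) := by
      rw [hgf]
      exact tsum_of_norm_bounded hgeo hnormb
    have h1r : 0 < 1 - r := by linarith
    have h1ρ : 0 < 1 - ρ := by linarith
    have hρnρ : ρ ^ n ≤ ρ := by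
      calc ρ ^ n ≤ ρ ^ 1 := pow_le_pow_of_le_one hρ0.le hρ1.le hn1
        _ = ρ := pow_one ρ
    have hcomp : c * r / (1 - r) ≤ c * ρ ^ n / (1 - ρ) := by
      apply div_le_div₀ (by positivity)
        (mul_le_mul_of_nonneg_left hrρ hc.le) h1ρ
      have : r ≤ ρ := le_trans hrρ hρnρ
      linarith
    have hlt : ‖g - f‖ < ‖f‖ :=
      lt_of_le_of_lt (le_trans htail hcomp) (hM₀ n hnM₀)
    have hgne : g ≠ 0 := by
      intro h
      rw [h, zero_sub, norm_neg] at hlt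
      exact lt_irrefl _ hlt
    exact ⟨g, hgne, hglim.1, hglim.2.symm⟩
  refine ⟨key, ?_⟩
  intro l _
  have hγα : α < (α + 1) / 2 := by linarith [hα.2]
  have hγ1 : (α + 1) / 2 < 1 := by linarith [hα.2]
  obtain ⟨M, hM, hMs⟩ := key ((α + 1) / 2) hγα hγ1
  have hγ0 : (0 : ℝ) < (α + 1) / 2 := by linarith [hα.1]
  have htend : Filter.Tendsto (fun n : ℕ => ((α + 1) / 2) ^ n * ‖l‖) atTop (𝓝 0) := by
    have h0 := tendsto_pow_atTop_nhds_zero_of_lt_one hγ0.le hγ1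
    simpa using h0.mul_const ‖l‖
  obtain ⟨M₁, hM₁⟩ := (Filter.eventually_atTop).mp
    (htend.eventually (ge_mem_nhds one_pos))
  refine ⟨max M M₁, lt_of_lt_of_le hM (le_max_left _ _), ?_⟩
  intro n hn
  apply hMs n (le_trans (le_max_left _ _) hn)
  have hb := hM₁ n (le_trans (le_max_right _ _) hn)
  rw [le_div_iff₀ (pow_pos hγ0 n)]
  linarith [hb]
end

section
/- Spectral properties, part 7 (nontrivial kernel and full point spectrum): Let X be a complex infinite-dimensional separable Banach space and let A be a densely defined linear operator in X such that every power A^n (n ∈ ℕ) is a closed operator. Suppose B : X → X is a bounded linear operator such that: for every f ∈ X, Bf ∈ D(A) and A(Bf) = f; for every n ∈ ℕ, ker A^n ∩ R(B^n) = {0}; there exists a dense set Y ⊆ C^∞(A) with B(Y) ⊆ Y and Y ⊆ ⋃_{n≥1} ker A^n; and for every f ∈ X and every α ∈ (0,1) there exists c = c(f,α) > 0 with ‖B^n f‖ ≤ c·α^n for all n ∈ ℕ (i.e., limsup_{n→∞} ‖B^n f‖^{1/n} = 0 for all f ∈ X). Then ker A ≠ {0}, and for every n ∈ ℕ one has σ_p(A^n)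 = ℂ, i.e., every λ ∈ ℂ is an eigenvalue of A^n. -/
open Filter Topology TopologicalSpace

set_option maxHeartbeats 1000000 in
/-- **Spectral properties, part 7: nontrivial kernel and full point spectra.** -/
theorem spectral_properties_part7_full_point_spectrum
    {X : Type*} [NormedAddCommGroup X] [NormedSpace ℂ X]
    [CompleteSpace X] [SeparableSpace X]
    (hinfdim : ¬ FiniteDimensional ℂ X)
    (D : Submodule ℂ X) (A : X → X)
    (hlin : IsLinearOn ℂ A (D : Set X))
    (hdd : Dense (D : Set X))
    (hcl : ∀ n : ℕ, 0 < n → ClosedPower A (D : Set X) n)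
    (B : X →L[ℂ] X)
    (hB1 : ∀ f : X, B f ∈ (D : Set X) ∧ A (B f) = f)
    (hkerR : ∀ n : ℕ, 0 < n → ∀ x, x ∈ opDom A (D : Set X) n → A^[n] x = 0 →
      (∃ y, (⇑B)^[n] y = x) → x = 0)
    (Y : Set X) (hYsub : Y ⊆ opCinf A (D : Set X)) (hYdense : Dense Y)
    (hBmaps : Set.MapsTo (⇑B) Y Y)
    (hYker : ∀ f ∈ Y, ∃ N : ℕ, ∀ n ≥ N, A^[n] f = 0)
    (hquasi : ∀ f : X, ∀ α ∈ Set.Ioo (0 : ℝ) 1, ∃ c > 0, ∀ n : ℕ, 0 < n →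
      ‖(⇑B)^[n] f‖ ≤ c * α ^ n) :
    (∃ x ∈ (D : Set X), x ≠ 0 ∧ A x = 0) ∧
    (∀ n : ℕ, 0 < n → ∀ l : ℂ, l ∈ pointSpecPow A (D : Set X) n) := by
    -- Step 1: find a nonzero kernel element of A.
  have hXnt : ∃ z : X, z ≠ 0 := by
    by_contra h
    push_neg at h
    exact hinfdim (by
      have : Subsingleton X := ⟨fun a b => by rw [h a, h b]⟩
      infer_instance)
  obtain ⟨z, hz⟩ := hXnt
  obtain ⟨y, hyY, hyz⟩ : ∃ y ∈ Y, y ∈ Metric.ball z ‖z‖ := by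
    have := hYdense.inter_open_nonempty (Metric.ball z ‖z‖) Metric.isOpen_ball
      ⟨z, by simpa using norm_pos_iff.mpr hz⟩
    obtain ⟨y, hy1, hy2⟩ := this
    exact ⟨y, hy2, hy1⟩
  have hy0 : y ≠ 0 := by
    intro h
    rw [h] at hyz
    simp [Metric.mem_ball, dist_eq_norm] at hyz
  obtain ⟨N, hN⟩ := hYker y hyY
  have hexm : ∃ m, A^[m] y = 0 := ⟨N, hN N le_rfl⟩
  classical
  set m := Nat.find hexm with hm
  have hmy : A^[m] y = 0 := Nat.find_spec hexm
  have hm1 : 0 < m := by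
    rcases Nat.eq_zero_or_pos m with h | h
    · exfalso; apply hy0; have := hmy; rw [h] at this; simpa using this
    · exact h
  set x : X := A^[m - 1] y with hxdef
  have hx_ne : x ≠ 0 := Nat.find_min hexm (by omega)
  have hxD : x ∈ (D : Set X) := hYsub hyY (m - 1)
  have hAx : A x = 0 := by
    have : A^[m] y = A (A^[m-1] y) := by
      conv_lhs => rw [show m = (m-1) + 1 by omega]
      rw [Function.iterate_succ_apply']
    rw [hxdef, ← this, hmy]
  -- Step 2: for each μ, construct an eigenvector g with A g = μ • g.
  have key : ∀ μ : ℂ, ∃ g : X, g ≠ 0 ∧ g ∈ (D : Set X) ∧ A g = μ • g := by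
    intro μ
    set α : ℝ := 1 / (2 * (‖μ‖ + 1)) with hα
    have hμ1 : (0:ℝ) < ‖μ‖ + 1 := by positivity
    have hα01 : α ∈ Set.Ioo (0:ℝ) 1 := by
      constructor
      · positivity
      · rw [hα, div_lt_one (by positivity)]
        nlinarith [norm_nonneg μ]
    obtain ⟨c, hc0, hc⟩ := hquasi x α hα01
    set u : ℕ → X := fun n => μ ^ n • (⇑B)^[n] x with hu
    have hμα : ‖μ‖ * α ≤ 1 / 2 := by
      rw [hα, mul_one_div, div_le_div_iff₀ (by positivity) (by norm_num : (0:ℝ) < 2)]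
      nlinarith [norm_nonneg μ]
    have hbound : ∀ n : ℕ, ‖u (n + 1)‖ ≤ c * (1/2 : ℝ) ^ (n + 1) := by
      intro n
      have h1 : ‖u (n+1)‖ = ‖μ‖ ^ (n+1) * ‖(⇑B)^[n+1] x‖ := by
        rw [hu]; simp [norm_smul, norm_pow]
      rw [h1]
      calc ‖μ‖ ^ (n+1) * ‖(⇑B)^[n+1] x‖
          ≤ ‖μ‖ ^ (n+1) * (c * α ^ (n+1)) := by
            apply mul_le_mul_of_nonneg_left (hc (n+1) (by omega)) (by positivity)
        _ = c * (‖μ‖ * α) ^ (n+1) := by ring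
        _ ≤ c * (1/2 : ℝ) ^ (n+1) := by
            apply mul_le_mul_of_nonneg_left _ hc0.le
            exact pow_le_pow_left₀ (by positivity) hμα _
    have hsum : Summable u := by
      rw [← summable_nat_add_iff 1]
      apply Summable.of_norm
      apply Summable.of_nonneg_of_le (fun n => norm_nonneg _) hbound
      have : Summable (fun n : ℕ => c * (1/2 : ℝ) ^ n) :=
        (summable_geometric_of_lt_one (by norm_num) (by norm_num)).mul_left c
      exact (summable_nat_add_iff 1).mpr this
    set g : X := ∑' n, u n with hg
    have hhs : HasSum u g := hsum.hasSum
    set S : ℕ → X := fun k => ∑ i ∈ Finset.range k, u i with hS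
    have hSg : Filter.Tendsto S Filter.atTop (nhds g) := hhs.tendsto_sum_nat
    have huD : ∀ n, u n ∈ (D : Set X) := by
      intro n
      cases n with
      | zero =>
        have h0 : u 0 = x := by simp [hu]
        rw [h0]; exact hxD
      | succ k =>
        rw [hu]
        apply D.smul_mem
        rw [Function.iterate_succ_apply']
        exact (hB1 _).1
    have hSD : ∀ k, S k ∈ (D : Set X) := by
      intro k
      induction k with
      | zero => simp [hS]
      | succ k ih =>
        have : S (k+1) = S k + u k := by simp [hS, Finset.sum_range_succ]
        rw [this]
        exact D.add_mem ih (huD k)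
    have hAu : ∀ n, A (u (n + 1)) = μ • u n := by
      intro n
      rw [hu]
      simp only
      rw [Function.iterate_succ_apply']
      rw [hlin.2 _ _ (hB1 _).1, (hB1 _).2, pow_succ, mul_comm, mul_smul]
    have hAS : ∀ k, A (S (k + 1)) = μ • S k := by
      intro k
      induction k with
      | zero =>
        have : S 1 = x := by simp [hS, hu]
        rw [this, hAx]
        simp [hS]
      | succ k ih =>
        have h1 : S (k + 2) = S (k + 1) + u (k + 1) := by
          simp [hS, Finset.sum_range_succ]
        have h2 : S (k + 1) = S k + u k := by
          simp [hS, Finset.sum_range_succ]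
        rw [h1, hlin.1 _ (hSD (k+1)) _ (huD (k+1)), ih, hAu, h2, smul_add]
    -- use closedness of A to get A g = μ • g
    have hclosed := hcl 1 one_pos
    have htend : Filter.Tendsto (fun k => (S (k + 1), μ • S k)) Filter.atTop
        (nhds (g, μ • g)) := by
      apply Filter.Tendsto.prodMk_nhds
      · exact hSg.comp (Filter.tendsto_add_atTop_nat 1)
      · exact hSg.const_smul μ
    have hev : ∀ᶠ k in Filter.atTop, (S (k + 1), μ • S k) ∈
        {p : X × X | p.1 ∈ opDom A (D : Set X) 1 ∧ p.2 = A^[1] p.1} := by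
      filter_upwards with k
      refine ⟨?_, ?_⟩
      · intro j hj
        interval_cases j
        simpa using hSD (k + 1)
      · simpa using (hAS k).symm
    have hmem : (g, μ • g) ∈ {p : X × X | p.1 ∈ opDom A (D : Set X) 1 ∧ p.2 = A^[1] p.1} :=
      hclosed.mem_of_tendsto htend hev
    obtain ⟨hgdom, hgA⟩ := hmem
    have hgD : g ∈ (D : Set X) := by simpa using hgdom 0 (by norm_num)
    have hAg : A g = μ • g := by simpa using hgA.symm
    -- g ≠ 0 : g = x + μ • B g
    have hrec : g = x + (μ • B) g := by
      have h1 : g = u 0 + ∑' n, u (n + 1) := Summable.tsum_eq_zero_add hsum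
      have h2 : ∀ n, u (n + 1) = (μ • B) (u n) := by
        intro n
        rw [hu]
        simp only [ContinuousLinearMap.smul_apply, map_smul,
          Function.iterate_succ_apply']
        rw [pow_succ, mul_comm, mul_smul, smul_comm]
      have h3 : ∑' n, u (n + 1) = (μ • B) g := by
        calc ∑' n, u (n + 1) = ∑' n, (μ • B) (u n) := tsum_congr h2
          _ = (μ • B) (∑' n, u n) := ((μ • B).map_tsum hsum).symm
          _ = (μ • B) g := by rw [← hg]
      have h0 : u 0 = x := by simp [hu]
      conv_lhs => rw [h1]
      rw [h3, h0]
    have hgne : g ≠ 0 := by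
      intro h
      rw [h] at hrec
      simp only [map_zero, add_zero] at hrec
      exact hx_ne hrec.symm
    exact ⟨g, hgne, hgD, hAg⟩
  constructor
  · exact ⟨x, hxD, hx_ne, hAx⟩
  · intro n hn l
    obtain ⟨μ, hμ⟩ := IsAlgClosed.exists_pow_nat_eq l hn (k := ℂ)
    obtain ⟨g, hgne, hgD, hAg⟩ := key μ
    have hiter : ∀ k : ℕ, A^[k] g = μ ^ k • g := by
      intro k
      induction k with
      | zero => simp
      | succ k ih =>
        rw [Function.iterate_succ_apply', ih,
          hlin.2 _ _ hgD, hAg, pow_succ, mul_comm, mul_smul, smul_comm]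
    refine ⟨g, hgne, ?_, ?_⟩
    · intro k _
      rw [hiter k]
      exact D.smul_mem _ hgD
    · rw [hiter n, hμ]
end

section
/- Unit circle in the point spectra: Let X be a complex infinite-dimensional separable Banach space and let A be a densely defined linear operator in X such that every power A^n (n ∈ ℕ) is a closed operator, and suppose there exist a set Y ⊆ C^∞(A) dense in X and a mapping B : Y → Y such that (1) ABf = f for every f ∈ Y and (2) for every f ∈ Y there exist α = α(f) ∈ (0,1) and c = c(f,α) > 0 with max(‖A^n f‖, ‖B^n f‖) ≤ c·α^n for all n ∈ ℕ. Then there exists M ∈ ℕ such that for every n ≥ M the unit circle {λ ∈ ℂ : |λ| = 1} is contained in the point spectrum σ_p(A^n). -/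
open Filter Topology TopologicalSpace

/-- candidate eigenvector -/
noncomputable def gvec {X : Type*} [NormedAddCommGroup X] [NormedSpace ℂ X]
    (a b : ℕ → X) (μ : ℂ) : X :=
  (∑' m : ℕ, μ ^ m • b m) + (∑' m : ℕ, (μ⁻¹) ^ (m + 1) • a (m + 1))

section Eigen

variable {X : Type*} [NormedAddCommGroup X] [NormedSpace ℂ X] [CompleteSpace X]
  (D : Submodule ℂ X) (A : X → X) (a b : ℕ → X) (C α : ℝ) (μ : ℂ)

theorem summable_geo_smul (hα0 : 0 ≤ α) (hα1 : α < 1)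
    (hb : ∀ m, ‖b m‖ ≤ C * α ^ m) (hμ : ‖μ‖ = 1) :
    Summable (fun m : ℕ => μ ^ m • b m) := by
  apply Summable.of_norm
  apply Summable.of_nonneg_of_le (fun m => norm_nonneg _) (fun m => ?_)
    ((summable_geometric_of_lt_one hα0 hα1).mul_left C)
  rw [norm_smul, norm_pow, hμ, one_pow, one_mul]
  exact hb m

variable (hlin : IsLinearOn ℂ A (D : Set X)) (hcl1 : ClosedPower A (D : Set X) 1)
  (haD : ∀ m, a m ∈ D) (hbD : ∀ m, b m ∈ D)
  (haS : ∀ m, A (a m) = a (m + 1)) (hbS : ∀ m, A (b (m + 1)) = b m)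
  (hAb0 : A (b 0) = a 1)
  (hα0 : 0 < α) (hα1 : α < 1)
  (ha : ∀ m, ‖a m‖ ≤ C * α ^ m) (hb : ∀ m, ‖b m‖ ≤ C * α ^ m)
  (hμ : ‖μ‖ = 1)

include hlin in
theorem A_zero : A 0 = 0 := by
  have := hlin.2 0 0 D.zero_mem
  simpa using this

include hlin in
theorem A_finsum (K : ℕ) (x : ℕ → X) (hx : ∀ i, x i ∈ D) :
    A (∑ m ∈ Finset.range K, x m) = ∑ m ∈ Finset.range K, A (x m) := by
  induction K with
  | zero => simpa using A_zero D A hlin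
  | succ K ih =>
      rw [Finset.sum_range_succ, Finset.sum_range_succ,
        hlin.1 _ (Submodule.sum_mem D fun i _ => hx i) _ (hx K), ih]

include hlin haD hbD haS hbS hAb0 hα0 hα1 ha hb hμ in
theorem gvec_eigen (hcl1 : ClosedPower A (D : Set X) 1) :
    gvec a b μ ∈ D ∧ A (gvec a b μ) = μ • gvec a b μ := by
  have hμ0 : μ ≠ 0 := by intro h0; simp [h0] at hμ
  set ζ : ℂ := μ⁻¹ with hζ
  have hμζ : μ * ζ = 1 := mul_inv_cancel₀ hμ0
  have hζn : ‖ζ‖ = 1 := by rw [hζ, norm_inv, hμ]; norm_num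
  -- summability
  have hs1 : Summable (fun m : ℕ => μ ^ m • b m) :=
    summable_geo_smul b C α μ hα0.le hα1 hb hμ
  have hs2 : Summable (fun m : ℕ => ζ ^ (m + 1) • a (m + 1)) := by
    apply Summable.of_norm
    apply Summable.of_nonneg_of_le (fun m => norm_nonneg _) (fun m => ?_)
      ((summable_geometric_of_lt_one hα0.le hα1).mul_left (C * α))
    rw [norm_smul, norm_pow, hζn, one_pow, one_mul]
    calc ‖a (m + 1)‖ ≤ C * α ^ (m + 1) := ha (m + 1)
      _ = C * α * α ^ m := by ring
  -- partial sums
  set S1 : ℕ → X := fun K => ∑ m ∈ Finset.range K, μ ^ m • b m with hS1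
  set S2 : ℕ → X := fun K => ∑ m ∈ Finset.range K, ζ ^ (m + 1) • a (m + 1) with hS2
  have hS1D : ∀ K, S1 K ∈ D := fun K =>
    Submodule.sum_mem D fun i _ => D.smul_mem _ (hbD i)
  have hS2D : ∀ K, S2 K ∈ D := fun K =>
    Submodule.sum_mem D fun i _ => D.smul_mem _ (haD (i + 1))
  set s : ℕ → X := fun k => S1 (k + 1) + S2 (k + 1) with hs
  have hsD : ∀ k, s k ∈ D := fun k => D.add_mem (hS1D _) (hS2D _)
  -- A on partial sums
  have hA1 : ∀ k, A (S1 (k + 1)) = a 1 + μ • S1 k := by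
    intro k
    rw [hS1, A_finsum D A hlin _ _ (fun i => D.smul_mem _ (hbD i))]
    have e : ∀ m : ℕ, A (μ ^ m • b m) = μ ^ m • A (b m) :=
      fun m => hlin.2 _ _ (hbD m)
    simp only [e]
    rw [Finset.sum_range_succ']
    simp only [hbS, hAb0, pow_zero, one_smul]
    rw [add_comm, Finset.smul_sum]
    congr 1
    exact Finset.sum_congr rfl fun m _ => by rw [smul_smul, ← pow_succ']
  have hA2 : ∀ k, A (S2 (k + 1)) = μ • S2 (k + 1) - a 1 + ζ ^ (k + 1) • a (k + 2) := by
    intro k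
    have e1 : A (S2 (k + 1)) = ∑ m ∈ Finset.range (k + 1), ζ ^ (m + 1) • a (m + 2) := by
      rw [hS2, A_finsum D A hlin _ _ (fun i => D.smul_mem _ (haD (i + 1)))]
      exact Finset.sum_congr rfl fun m _ => by
        rw [hlin.2 _ _ (haD (m + 1)), haS]
    have e2 : μ • S2 (k + 1) = ∑ m ∈ Finset.range (k + 1), ζ ^ m • a (m + 1) := by
      rw [hS2, Finset.smul_sum]
      exact Finset.sum_congr rfl fun m _ => by
        rw [smul_smul, pow_succ', ← mul_assoc, hμζ, one_mul]
    have e3 : ∑ m ∈ Finset.range (k + 1), ζ ^ m • a (m + 1)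
        = (∑ m ∈ Finset.range (k + 1), ζ ^ (m + 1) • a (m + 2))
          - ζ ^ (k + 1) • a (k + 2) + a 1 := by
      rw [Finset.sum_range_succ' (fun m => ζ ^ m • a (m + 1)) k,
        Finset.sum_range_succ (fun m => ζ ^ (m + 1) • a (m + 2)) k]
      simp only [pow_zero, one_smul]
      abel
    rw [e1, e2, e3]
    abel
  have hkey : ∀ k, A (s k) = μ • s k + (ζ ^ (k + 1) • a (k + 2) - μ ^ (k + 1) • b k) := by
    intro k
    have : A (s k) = A (S1 (k + 1)) + A (S2 (k + 1)) :=
      hlin.1 _ (hS1D _) _ (hS2D _)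
    rw [this, hA1, hA2]
    have : S1 (k + 1) = S1 k + μ ^ k • b k := by
      rw [hS1]; exact Finset.sum_range_succ _ _
    rw [hs]
    simp only [this, smul_add, smul_smul, ← pow_succ']
    abel
  -- limits
  set g : X := gvec a b μ with hg
  have hglim : Tendsto s atTop (𝓝 g) := by
    have l1 : Tendsto (fun k => S1 (k + 1)) atTop (𝓝 (∑' m : ℕ, μ ^ m • b m)) :=
      (hs1.hasSum.tendsto_sum_nat).comp (tendsto_add_atTop_nat 1)
    have l2 : Tendsto (fun k => S2 (k + 1)) atTop
        (𝓝 (∑' m : ℕ, ζ ^ (m + 1) • a (m + 1))) :=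
      (hs2.hasSum.tendsto_sum_nat).comp (tendsto_add_atTop_nat 1)
    exact l1.add l2
  have herr : Tendsto (fun k : ℕ => ζ ^ (k + 1) • a (k + 2) - μ ^ (k + 1) • b k)
      atTop (𝓝 0) := by
    have e1 : Tendsto (fun k : ℕ => ζ ^ (k + 1) • a (k + 2)) atTop (𝓝 0) := by
      apply tendsto_zero_iff_norm_tendsto_zero.2
      apply squeeze_zero (fun k => norm_nonneg _) (fun k => ?_)
        (by simpa using (tendsto_pow_atTop_nhds_zero_of_lt_one hα0.le hα1).const_mul (C * α ^ 2))
      rw [norm_smul, norm_pow, hζn, one_pow, one_mul]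
      calc ‖a (k + 2)‖ ≤ C * α ^ (k + 2) := ha (k + 2)
        _ = C * α ^ 2 * α ^ k := by ring
    have e2 : Tendsto (fun k : ℕ => μ ^ (k + 1) • b k) atTop (𝓝 0) := by
      apply tendsto_zero_iff_norm_tendsto_zero.2
      apply squeeze_zero (fun k => norm_nonneg _) (fun k => ?_)
        (by simpa using (tendsto_pow_atTop_nhds_zero_of_lt_one hα0.le hα1).const_mul C)
      rw [norm_smul, norm_pow, hμ, one_pow, one_mul]
      exact hb k
    simpa using e1.sub e2
  have hAlim : Tendsto (fun k => A (s k)) atTop (𝓝 (μ • g)) := by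
    simp only [hkey]
    simpa using (hglim.const_smul μ).add herr
  -- closed graph
  have hmem : ∀ k : ℕ, (s k, A (s k)) ∈
      {p : X × X | p.1 ∈ opDom A (D : Set X) 1 ∧ p.2 = A^[1] p.1} := by
    intro k
    refine ⟨fun k' hk' => ?_, by simp⟩
    interval_cases k'
    simpa using hsD k
  have hlimmem := hcl1.mem_of_tendsto (hglim.prodMk_nhds hAlim)
    (Eventually.of_forall hmem)
  obtain ⟨hd, he⟩ := hlimmem
  refine ⟨?_, ?_⟩
  · simpa using hd 0 one_pos
  · have := he.symm
    simpa using this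

end Eigen


theorem real_pow_eq_one_of (x : ℝ) (hx : 0 ≤ x) (n : ℕ) (hn : n ≠ 0)
    (h : x ^ n = 1) : x = 1 := by
  rcases lt_trichotomy x 1 with h1 | h1 | h1
  · have := pow_lt_one₀ hx h1 hn
    rw [h] at this; linarith
  · exact h1
  · have := one_lt_pow₀ h1 hn
    rw [h] at this; linarith

/-- **Unit circle in the point spectra.** -/
theorem unit_circle_in_point_spectra
    {X : Type*} [NormedAddCommGroup X] [NormedSpace ℂ X]
    [CompleteSpace X] [SeparableSpace X]
    (hinfdim : ¬ FiniteDimensional ℂ X)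
    (D : Submodule ℂ X) (A : X → X)
    (hlin : IsLinearOn ℂ A (D : Set X))
    (hdd : Dense (D : Set X))
    (hcl : ∀ n : ℕ, 0 < n → ClosedPower A (D : Set X) n)
    (Y : Set X) (hYsub : Y ⊆ opCinf A (D : Set X)) (hYdense : Dense Y)
    (B : X → X) (hBmaps : Set.MapsTo B Y Y)
    (h1 : ∀ f ∈ Y, A (B f) = f)
    (h2 : ∀ f ∈ Y, ∃ α ∈ Set.Ioo (0 : ℝ) 1, ∃ c > 0,
      ∀ n : ℕ, 0 < n → max ‖A^[n] f‖ ‖B^[n] f‖ ≤ c * α ^ n)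
    :
    ∃ M : ℕ, 0 < M ∧ ∀ n ≥ M, ∀ l : ℂ, ‖l‖ = 1 →
      l ∈ pointSpecPow A (D : Set X) n := by
  classical
  -- a nonzero element of `Y`
  have hex : ∃ x : X, x ≠ 0 := by
    by_contra h
    push_neg at h
    refine hinfdim ?_
    have : Subsingleton X := ⟨fun u v => by rw [h u, h v]⟩
    infer_instance
  obtain ⟨x, hx⟩ := hex
  obtain ⟨f₀, hf₀Y, hf₀x⟩ : ∃ f₀ ∈ Y, dist x f₀ < ‖x‖ :=
    Metric.mem_closure_iff.1 (hYdense x) ‖x‖ (norm_pos_iff.2 hx)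
  have hf₀ : f₀ ≠ 0 := by
    intro h
    rw [h, dist_zero_right] at hf₀x
    exact lt_irrefl _ hf₀x
  have hf₀pos : (0:ℝ) < ‖f₀‖ := norm_pos_iff.2 hf₀
  obtain ⟨α, hαIoo, c, hc, hbound⟩ := h2 f₀ hf₀Y
  obtain ⟨hα0, hα1⟩ := hαIoo
  set a : ℕ → X := fun m => A^[m] f₀ with ha_def
  set b : ℕ → X := fun m => B^[m] f₀ with hb_def
  have hbY : ∀ m, b m ∈ Y := by
    intro m
    induction m with
    | zero => simpa [hb_def] using hf₀Y
    | succ m ih =>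
        have : b (m + 1) = B (b m) := by
          rw [hb_def]; exact Function.iterate_succ_apply' B m f₀
        rw [this]; exact hBmaps ih
  have haD : ∀ m, a m ∈ D := fun m => hYsub hf₀Y m
  have hbD : ∀ m, b m ∈ D := fun m => by simpa using hYsub (hbY m) 0
  have haS : ∀ m, A (a m) = a (m + 1) := fun m =>
    (Function.iterate_succ_apply' A m f₀).symm
  have hbS : ∀ m, A (b (m + 1)) = b m := by
    intro m
    have e : b (m + 1) = B (b m) := by
      rw [hb_def]; exact Function.iterate_succ_apply' B m f₀
    rw [e, h1 _ (hbY m)]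
  have hb0 : b 0 = f₀ := by simp [hb_def]
  have hAb0 : A (b 0) = a 1 := by
    rw [hb0, ha_def]; simp
  set C : ℝ := max c ‖f₀‖ with hC_def
  have ha' : ∀ m, ‖a m‖ ≤ C * α ^ m := by
    intro m
    cases m with
    | zero =>
        have e : a 0 = f₀ := by simp [ha_def]
        rw [e, pow_zero, mul_one]
        exact le_max_right c ‖f₀‖
    | succ m =>
        calc ‖a (m + 1)‖ ≤ c * α ^ (m + 1) :=
              le_trans (le_max_left _ _) (hbound (m + 1) (Nat.succ_pos m))
          _ ≤ C * α ^ (m + 1) :=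
              mul_le_mul_of_nonneg_right (le_max_left _ _) (by positivity)
  have hb' : ∀ m, ‖b m‖ ≤ C * α ^ m := by
    intro m
    cases m with
    | zero =>
        rw [hb0, pow_zero, mul_one]
        exact le_max_right c ‖f₀‖
    | succ m =>
        calc ‖b (m + 1)‖ ≤ c * α ^ (m + 1) :=
              le_trans (le_max_right _ _) (hbound (m + 1) (Nat.succ_pos m))
          _ ≤ C * α ^ (m + 1) :=
              mul_le_mul_of_nonneg_right (le_max_left _ _) (by positivity)
  have hC0 : 0 < C := lt_of_lt_of_le hc (le_max_left _ _)
  -- the eigenvector machinery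
  have heig : ∀ μ : ℂ, ‖μ‖ = 1 →
      gvec a b μ ∈ D ∧ A (gvec a b μ) = μ • gvec a b μ := fun μ hμ =>
    gvec_eigen D A a b C α μ hlin haD hbD haS hbS hAb0 hα0 hα1 ha' hb' hμ
      (hcl 1 one_pos)
  have hpow : ∀ μ : ℂ, ‖μ‖ = 1 → ∀ k : ℕ,
      A^[k] (gvec a b μ) = μ ^ k • gvec a b μ := by
    intro μ hμ k
    induction k with
    | zero => simp
    | succ k ih =>
        rw [Function.iterate_succ_apply', ih, hlin.2 _ _ (heig μ hμ).1,
          (heig μ hμ).2, smul_smul, ← pow_succ]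
  -- choice of M
  have hlim : Tendsto (fun n : ℕ => 2 * C / (1 - α) * α ^ n) atTop (𝓝 0) := by
    simpa using (tendsto_pow_atTop_nhds_zero_of_lt_one hα0.le hα1).const_mul
      (2 * C / (1 - α))
  obtain ⟨M0, hM0⟩ := eventually_atTop.1 (hlim.eventually_lt_const hf₀pos)
  refine ⟨max M0 1, lt_of_lt_of_le one_pos (le_max_right _ _), ?_⟩
  intro n hn l hl
  have hn1 : 1 ≤ n := le_trans (le_max_right M0 1) hn
  have hnM0 : M0 ≤ n := le_trans (le_max_left _ _) hn
  have hn0 : n ≠ 0 := by omega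
  have hl0 : l ≠ 0 := by intro h; rw [h] at hl; simp at hl
  obtain ⟨p, hp⟩ : ∃ p, n = p + 1 := ⟨n - 1, by omega⟩
  -- n-th roots of l on the unit circle
  set ν : ℂ := l ^ ((n : ℂ)⁻¹) with hν_def
  have hνn : ν ^ n = l := Complex.cpow_nat_inv_pow l hn0
  have hnorm_of_pow : ∀ z : ℂ, z ^ n = l → ‖z‖ = 1 := by
    intro z hz
    refine real_pow_eq_one_of _ (norm_nonneg z) n hn0 ?_
    rw [← norm_pow, hz, hl]
  set ω : ℂ := Complex.exp (2 * Real.pi * Complex.I / n) with hω_def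
  have hprim : IsPrimitiveRoot ω n := Complex.isPrimitiveRoot_exp n hn0
  have hωn : ω ^ n = 1 := hprim.pow_eq_one
  set μf : ℕ → ℂ := fun j => ν * ω ^ j with hμf_def
  have hμfn : ∀ j, (μf j) ^ n = l := by
    intro j
    rw [hμf_def]
    simp only
    rw [mul_pow, ← pow_mul, mul_comm j n, pow_mul, hωn, one_pow, mul_one, hνn]
  have hμf1 : ∀ j, ‖μf j‖ = 1 := fun j => hnorm_of_pow _ (hμfn j)
  -- it suffices to find a root where `gvec` is nonzero
  suffices hgj : ∃ j ∈ Finset.range n, gvec a b (μf j) ≠ 0 by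
    obtain ⟨j, _, hgne⟩ := hgj
    refine ⟨gvec a b (μf j), hgne, ?_, ?_⟩
    · intro k hk
      rw [hpow _ (hμf1 j) k]
      exact D.smul_mem _ (heig _ (hμf1 j)).1
    · rw [hpow _ (hμf1 j) n, hμfn j]
  by_contra hall
  push_neg at hall
  -- sums of powers of the roots
  have hsumlt : ∀ m : ℕ, 0 < m → m < n →
      ∑ j ∈ Finset.range n, (μf j) ^ m = 0 := by
    intro m hm hmn
    have e : ∀ j, (μf j) ^ m = ν ^ m * (ω ^ m) ^ j := by
      intro j
      rw [hμf_def]; simp only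
      rw [mul_pow, ← pow_mul, mul_comm j m, pow_mul]
    simp only [e, ← Finset.mul_sum]
    have hne : ω ^ m ≠ 1 := hprim.pow_ne_one_of_pos_of_lt hm.ne' hmn
    have h1' : (ω ^ m) ^ n = 1 := by
      rw [← pow_mul, mul_comm m n, pow_mul, hωn, one_pow]
    rw [geom_sum_eq hne, h1', sub_self, zero_div, mul_zero]
  have hsumltInv : ∀ m : ℕ, 0 < m → m < n →
      ∑ j ∈ Finset.range n, ((μf j)⁻¹) ^ m = 0 := by
    intro m hm hmn
    have hprim' : IsPrimitiveRoot ω⁻¹ n := hprim.inv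
    have e : ∀ j, ((μf j)⁻¹) ^ m = (ν⁻¹) ^ m * ((ω⁻¹) ^ m) ^ j := by
      intro j
      rw [hμf_def]; simp only
      rw [mul_inv, ← inv_pow, mul_pow, ← pow_mul, mul_comm j m, pow_mul]
    simp only [e, ← Finset.mul_sum]
    have hne : (ω⁻¹) ^ m ≠ 1 := hprim'.pow_ne_one_of_pos_of_lt hm.ne' hmn
    have h1' : ((ω⁻¹) ^ m) ^ n = 1 := by
      rw [← pow_mul, mul_comm m n, pow_mul, hprim'.pow_eq_one, one_pow]
    rw [geom_sum_eq hne, h1', sub_self, zero_div, mul_zero]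
  -- swap finite sum and tsums
  set P : ℕ → X := fun m => (∑ j ∈ Finset.range n, (μf j) ^ m) • b m with hP_def
  set Q : ℕ → X := fun m =>
    (∑ j ∈ Finset.range n, ((μf j)⁻¹) ^ (m + 1)) • a (m + 1) with hQ_def
  have hs1 : ∀ j, Summable (fun m : ℕ => (μf j) ^ m • b m) := fun j =>
    summable_geo_smul b C α (μf j) hα0.le hα1 hb' (hμf1 j)
  have hs2 : ∀ j, Summable (fun m : ℕ => ((μf j)⁻¹) ^ (m + 1) • a (m + 1)) := by
    intro j
    apply Summable.of_norm
    apply Summable.of_nonneg_of_le (fun m => norm_nonneg _) (fun m => ?_)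
      ((summable_geometric_of_lt_one hα0.le hα1).mul_left (C * α))
    rw [norm_smul, norm_pow, norm_inv, hμf1, inv_one, one_pow, one_mul]
    calc ‖a (m + 1)‖ ≤ C * α ^ (m + 1) := ha' (m + 1)
      _ = C * α * α ^ m := by ring
  have hswap : ∑ j ∈ Finset.range n, gvec a b (μf j)
      = (∑' m : ℕ, P m) + (∑' m : ℕ, Q m) := by
    unfold gvec
    rw [Finset.sum_add_distrib]
    congr 1
    · rw [← Summable.tsum_finsetSum (fun j _ => hs1 j)]
      exact tsum_congr fun m => by rw [hP_def]; exact (Finset.sum_smul).symm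
    · rw [← Summable.tsum_finsetSum (fun j _ => hs2 j)]
      exact tsum_congr fun m => by rw [hQ_def]; exact (Finset.sum_smul).symm
  -- summability of P and Q
  have hcoef : ∀ (z : ℕ → ℂ), (∀ j, ‖z j‖ = 1) →
      ‖∑ j ∈ Finset.range n, z j‖ ≤ (n : ℝ) := by
    intro z hz
    calc ‖∑ j ∈ Finset.range n, z j‖ ≤ ∑ j ∈ Finset.range n, ‖z j‖ :=
          norm_sum_le _ _
      _ = (n : ℝ) := by simp [hz]
  have hPn : ∀ m, ‖P m‖ ≤ (n : ℝ) * (C * α ^ m) := by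
    intro m
    rw [hP_def]
    simp only
    rw [norm_smul]
    exact mul_le_mul (hcoef _ fun j => by rw [norm_pow, hμf1, one_pow])
      (hb' m) (norm_nonneg _) (Nat.cast_nonneg n)
  have hQn : ∀ m, ‖Q m‖ ≤ (n : ℝ) * (C * α ^ (m + 1)) := by
    intro m
    rw [hQ_def]
    simp only
    rw [norm_smul]
    exact mul_le_mul
      (hcoef _ fun j => by rw [norm_pow, norm_inv, hμf1, inv_one, one_pow])
      (ha' (m + 1)) (norm_nonneg _) (Nat.cast_nonneg n)
  have hPsum : Summable P := by
    apply Summable.of_norm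
    apply Summable.of_nonneg_of_le (fun m => norm_nonneg _) (fun m => ?_)
      ((summable_geometric_of_lt_one hα0.le hα1).mul_left ((n : ℝ) * C))
    calc ‖P m‖ ≤ (n : ℝ) * (C * α ^ m) := hPn m
      _ = (n : ℝ) * C * α ^ m := by ring
  have hQsum : Summable Q := by
    apply Summable.of_norm
    apply Summable.of_nonneg_of_le (fun m => norm_nonneg _) (fun m => ?_)
      ((summable_geometric_of_lt_one hα0.le hα1).mul_left ((n : ℝ) * C * α))
    calc ‖Q m‖ ≤ (n : ℝ) * (C * α ^ (m + 1)) := hQn m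
      _ = (n : ℝ) * C * α * α ^ m := by ring
  -- split the tsums
  have hsplitP : (∑' m : ℕ, P m) = (n : ℂ) • f₀ + ∑' m : ℕ, P (m + n) := by
    rw [← hPsum.sum_add_tsum_nat_add n]
    congr 1
    rw [Finset.sum_eq_single_of_mem 0 (Finset.mem_range.2 (by omega))
      (fun m hm hm0 => by
        rw [hP_def]; simp only
        rw [hsumlt m (by omega) (Finset.mem_range.1 hm), zero_smul])]
    rw [hP_def]; simp only
    simp [hb0]
  have hsplitQ : (∑' m : ℕ, Q m) = ∑' m : ℕ, Q (m + p) := by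
    rw [← hQsum.sum_add_tsum_nat_add p]
    have e : ∑ m ∈ Finset.range p, Q m = 0 := by
      refine Finset.sum_eq_zero fun m hm => ?_
      rw [hQ_def]; simp only
      rw [hsumltInv (m + 1) (Nat.succ_pos m)
        (by have := Finset.mem_range.1 hm; omega), zero_smul]
    rw [e, zero_add]
  -- tail bounds
  have hEb : ‖∑' m : ℕ, P (m + n)‖ ≤ (n : ℝ) * C * α ^ n * (1 - α)⁻¹ := by
    refine tsum_of_norm_bounded
      ((hasSum_geometric_of_lt_one hα0.le hα1).mul_left ((n : ℝ) * C * α ^ n))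
      (fun m => ?_)
    calc ‖P (m + n)‖ ≤ (n : ℝ) * (C * α ^ (m + n)) := hPn (m + n)
      _ = (n : ℝ) * C * α ^ n * α ^ m := by rw [pow_add]; ring
  have hEa : ‖∑' m : ℕ, Q (m + p)‖ ≤ (n : ℝ) * C * α ^ n * (1 - α)⁻¹ := by
    refine tsum_of_norm_bounded
      ((hasSum_geometric_of_lt_one hα0.le hα1).mul_left ((n : ℝ) * C * α ^ n))
      (fun m => ?_)
    calc ‖Q (m + p)‖ ≤ (n : ℝ) * (C * α ^ (m + p + 1)) := hQn (m + p)
      _ = (n : ℝ) * C * α ^ n * α ^ m := by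
          rw [hp]; rw [show m + p + 1 = m + (p + 1) by omega, pow_add]; ring
  -- the contradiction
  have hzero : ∑ j ∈ Finset.range n, gvec a b (μf j) = 0 :=
    Finset.sum_eq_zero fun j hj => hall j hj
  have hkey : (n : ℂ) • f₀ = -((∑' m : ℕ, P (m + n)) + (∑' m : ℕ, Q (m + p))) := by
    have := hswap
    rw [hzero, hsplitP, hsplitQ] at this
    linear_combination (norm := abel) -this
  have hnorm : (n : ℝ) * ‖f₀‖ ≤ 2 * ((n : ℝ) * C * α ^ n * (1 - α)⁻¹) := by
    have e1 : ‖(n : ℂ) • f₀‖ = (n : ℝ) * ‖f₀‖ := by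
      rw [norm_smul, Complex.norm_natCast]
    calc (n : ℝ) * ‖f₀‖ = ‖(n : ℂ) • f₀‖ := e1.symm
      _ = ‖(∑' m : ℕ, P (m + n)) + (∑' m : ℕ, Q (m + p))‖ := by
          rw [hkey, norm_neg]
      _ ≤ ‖∑' m : ℕ, P (m + n)‖ + ‖∑' m : ℕ, Q (m + p)‖ := norm_add_le _ _
      _ ≤ 2 * ((n : ℝ) * C * α ^ n * (1 - α)⁻¹) := by
          have := hEb; have := hEa; linarith
  have hMn := hM0 n hnM0
  have hcast : (1 : ℝ) ≤ (n : ℝ) := by exact_mod_cast hn1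
  have heq : 2 * ((n : ℝ) * C * α ^ n * (1 - α)⁻¹)
      = (n : ℝ) * (2 * C / (1 - α) * α ^ n) := by
    rw [div_eq_mul_inv]; ring
  rw [heq] at hnorm
  have : (n : ℝ) * (2 * C / (1 - α) * α ^ n) < (n : ℝ) * ‖f₀‖ :=
    mul_lt_mul_of_pos_left hMn (by linarith)
  linarith
end
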